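/- arXiv:1505.07402 — 5 statements merged into one kernel-verified Lean document; each statement's English description precedes it below -/
import Mathlib

section
/- Under Assumptions 1 and 2, the origin of the reduced closed-loop system x' = A x is globally asymptotically stable: every solution x : ℝ → ℝ^{3n+(n−1)} of the linear ODE x'(t) = A x(t) converges to 0 as t → ∞. (Theorem 1 of the paper.) -/
open Matrix Filter

namespace StabAux

variable {ι : Type*} [Fintype ι]

lemma psd_form_nonneg {L : Matrix ι ι ℝ} (hL : L.PosSemidef) (v : ι → ℝ) :
    0 ≤ v ⬝ᵥ (L *ᵥ v) := by
  have := hL.dotProduct_mulVec_nonneg v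
  simpa using this

lemma psd_form_eq_zero {L : Matrix ι ι ℝ} [DecidableEq ι] (hL : L.PosSemidef) {v : ι → ℝ}
    (h : v ⬝ᵥ (L *ᵥ v) = 0) : L *ᵥ v = 0 := by
  exact (hL.dotProduct_mulVec_zero_iff v).1 (by simpa using h)

lemma hasDerivAt_quadForm (P : Matrix ι ι ℝ) (x : ℝ → ι → ℝ) (x' : ι → ℝ) (t : ℝ)
    (hx : HasDerivAt x x' t) :
    HasDerivAt (fun s => x s ⬝ᵥ (P *ᵥ x s)) (x' ⬝ᵥ (P *ᵥ x t) + x t ⬝ᵥ (P *ᵥ x')) t := by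
  have hxi : ∀ i, HasDerivAt (fun s => x s i) (x' i) t := hasDerivAt_pi.1 hx
  have h1 : HasDerivAt (fun s => ∑ i, ∑ j, x s i * (P i j * x s j))
      (∑ i, ∑ j, (x' i * (P i j * x t j) + x t i * (P i j * x' j))) t := by
    refine HasDerivAt.fun_sum fun i _ => HasDerivAt.fun_sum fun j _ => ?_
    exact (hxi i).mul ((hxi j).const_mul (P i j))
  have e1 : (fun s => x s ⬝ᵥ (P *ᵥ x s)) = fun s => ∑ i, ∑ j, x s i * (P i j * x s j) := by
    funext s
    simp [dotProduct, Matrix.mulVec, Finset.mul_sum]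
  have e2 : x' ⬝ᵥ (P *ᵥ x t) + x t ⬝ᵥ (P *ᵥ x') =
      ∑ i, ∑ j, (x' i * (P i j * x t j) + x t i * (P i j * x' j)) := by
    simp [dotProduct, Matrix.mulVec, Finset.mul_sum, Finset.sum_add_distrib]
  rw [e1, e2]
  exact h1

lemma continuous_matQuad (M N : Matrix ι ι ℝ) :
    Continuous fun y : ι → ℝ => (M *ᵥ y) ⬝ᵥ (N *ᵥ y) := by
  have : (fun y : ι → ℝ => (M *ᵥ y) ⬝ᵥ (N *ᵥ y)) =
      fun y => ∑ i, (∑ j, M i j * y j) * (∑ k, N i k * y k) := by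
    funext y; simp [dotProduct, Matrix.mulVec]
  rw [this]
  refine continuous_finset_sum _ fun i _ => Continuous.mul ?_ ?_ <;>
    exact continuous_finset_sum _ fun j _ => continuous_const.mul (continuous_apply j)

variable [Nonempty ι]

/-- Master compactness lemma for quadratic-type forms. -/
lemma master (p0 p1 q0 r : (ι → ℝ) → ℝ)
    (hp0c : Continuous p0) (hp1c : Continuous p1) (hq0c : Continuous q0) (hrc : Continuous r)
    (hp0h : ∀ (c : ℝ) y, p0 (c • y) = c^2 * p0 y)
    (hp1h : ∀ (c : ℝ) y, p1 (c • y) = c^2 * p1 y)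
    (hq0h : ∀ (c : ℝ) y, q0 (c • y) = c^2 * q0 y)
    (hrh : ∀ (c : ℝ) y, r (c • y) = c^2 * r y)
    (hp0pos : ∀ y, y ≠ 0 → 0 < p0 y)
    (hq0 : ∀ y, q0 y ≤ 0)
    (hker : ∀ y, y ≠ 0 → q0 y = 0 → r y < 0) :
    ∃ ε > 0, ∃ c > 0, ∃ C > 0, ∃ δ > 0, ∀ y : ι → ℝ,
      c * ‖y‖^2 ≤ p0 y + ε * p1 y ∧ p0 y + ε * p1 y ≤ C * ‖y‖^2 ∧
      q0 y + ε * r y ≤ -δ * ‖y‖^2 := by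
  have hnt : Nontrivial (ι → ℝ) := inferInstance
  set sph : Set (ι → ℝ) := Metric.sphere 0 1 with hsph
  have hcomp : IsCompact sph := isCompact_sphere 0 1
  have hne : sph.Nonempty := NormedSpace.sphere_nonempty.2 zero_le_one
  have hmem : ∀ y ∈ sph, ‖y‖ = 1 := by
    intro y hy; simpa [hsph] using hy
  have hne0 : ∀ y ∈ sph, y ≠ 0 := by
    intro y hy h0; have := hmem y hy; rw [h0] at this; simp at this
  -- bounds on sphere
  obtain ⟨y1, hy1, hy1max⟩ := hcomp.exists_isMaxOn hne (hp1c.abs.continuousOn)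
  set b1 : ℝ := |p1 y1| with hb1
  have hb1nn : 0 ≤ b1 := abs_nonneg _
  obtain ⟨y2, hy2, hy2max⟩ := hcomp.exists_isMaxOn hne (hrc.abs.continuousOn)
  set b2 : ℝ := |r y2| with hb2
  have hb2nn : 0 ≤ b2 := abs_nonneg _
  obtain ⟨y3, hy3, hy3max⟩ := hcomp.exists_isMaxOn hne (hp0c.continuousOn)
  obtain ⟨y0, hy0, hy0min⟩ := hcomp.exists_isMinOn hne (hp0c.continuousOn)
  set c0 : ℝ := p0 y0 with hc0
  have hc0pos : 0 < c0 := hp0pos y0 (hne0 y0 hy0)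
  -- the bad compact set K
  set K : Set (ι → ℝ) := sph ∩ {y | 0 ≤ r y} with hK
  have hKcomp : IsCompact K := hcomp.inter_right (isClosed_le continuous_const hrc)
  -- a : uniform negativity of q0 on K
  have hKa : ∃ a > 0, ∀ y ∈ K, q0 y ≤ -a := by
    rcases Set.eq_empty_or_nonempty K with hKe | hKne
    · exact ⟨1, one_pos, fun y hy => by rw [hKe] at hy; exact absurd hy (Set.notMem_empty y)⟩
    · obtain ⟨ya, hya, hyamax⟩ := hKcomp.exists_isMaxOn hKne (hq0c.continuousOn)
      refine ⟨-(q0 ya), ?_, fun y hy => by simpa using hyamax hy⟩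
      have hya0 : q0 ya < 0 := by
        rcases lt_or_eq_of_le (hq0 ya) with h | h
        · exact h
        · exact absurd (hker ya (hne0 ya hya.1) h) (not_lt.2 hya.2)
      linarith
  obtain ⟨a, ha, hKa⟩ := hKa
  -- choose ε
  set ε : ℝ := min (c0 / (2 * (b1 + 1))) (a / (2 * (b2 + 1))) with hε
  have hεpos : 0 < ε := lt_min (by positivity) (by positivity)
  have hε1 : ε * b1 ≤ c0 / 2 := by
    have h1 : ε ≤ c0 / (2 * (b1 + 1)) := min_le_left _ _
    have : ε * b1 ≤ (c0 / (2 * (b1 + 1))) * b1 := by nlinarith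
    have h2 : (c0 / (2 * (b1 + 1))) * b1 ≤ c0 / 2 := by
      rw [div_mul_eq_mul_div, div_le_div_iff₀ (by positivity) (by norm_num)]
      nlinarith
    linarith
  have hε2 : ε * b2 ≤ a / 2 := by
    have h1 : ε ≤ a / (2 * (b2 + 1)) := min_le_right _ _
    have : ε * b2 ≤ (a / (2 * (b2 + 1))) * b2 := by nlinarith
    have h2 : (a / (2 * (b2 + 1))) * b2 ≤ a / 2 := by
      rw [div_mul_eq_mul_div, div_le_div_iff₀ (by positivity) (by norm_num)]
      nlinarith
    linarith
  -- bounds of p1 and r on sphere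
  have hp1bd : ∀ y ∈ sph, |p1 y| ≤ b1 := fun y hy => hy1max hy
  have hrbd : ∀ y ∈ sph, |r y| ≤ b2 := fun y hy => hy2max hy
  -- negativity of q0 + ε r on sphere
  have hneg : ∀ y ∈ sph, q0 y + ε * r y < 0 := by
    intro y hy
    by_cases hr : r y < 0
    · have := hq0 y; nlinarith
    · push_neg at hr
      have hyK : y ∈ K := ⟨hy, hr⟩
      have h1 : q0 y ≤ -a := hKa y hyK
      have h2 : ε * r y ≤ ε * b2 := by
        have := hrbd y hy
        have : r y ≤ b2 := le_trans (le_abs_self _) this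
        nlinarith
      linarith
  -- uniform δ on sphere
  have hδ : ∃ δ > 0, ∀ y ∈ sph, q0 y + ε * r y ≤ -δ := by
    obtain ⟨yb, hyb, hybmax⟩ := hcomp.exists_isMaxOn hne ((hq0c.add (continuous_const.mul hrc)).continuousOn)
    refine ⟨-(q0 yb + ε * r yb), by linarith [hneg yb hyb], fun y hy => ?_⟩
    have h2 : q0 y + ε * r y ≤ q0 yb + ε * r yb := hybmax hy
    linarith
  obtain ⟨δ, hδpos, hδ⟩ := hδ
  -- constants c and C
  set c : ℝ := c0 / 2 with hc
  set C : ℝ := |p0 y3| + ε * b1 + 1 with hC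
  have hCpos : 0 < C := by positivity
  have hcpos : (0:ℝ) < c := by positivity
  -- sphere versions
  have hsphereP : ∀ y ∈ sph, c ≤ p0 y + ε * p1 y ∧ p0 y + ε * p1 y ≤ C := by
    intro y hy
    have h1 : c0 ≤ p0 y := hy0min hy
    have h2 : |p1 y| ≤ b1 := hp1bd y hy
    have h3 : p0 y ≤ |p0 y3| := le_trans (hy3max hy) (le_abs_self _)
    constructor
    · have : ε * p1 y ≥ -(ε * b1) := by
        have := neg_abs_le (p1 y); nlinarith
      have := hε1
      simp only [hc]; linarith
    · have : ε * p1 y ≤ ε * b1 := by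
        have : p1 y ≤ b1 := le_trans (le_abs_self _) h2
        nlinarith
      simp only [hC]; linarith
  refine ⟨ε, hεpos, c, hcpos, C, hCpos, δ, hδpos, ?_⟩
  -- extend by homogeneity
  intro y
  by_cases h0 : y = 0
  · subst h0
    have e0 : ∀ (f : (ι → ℝ) → ℝ), (∀ (c : ℝ) y, f (c • y) = c^2 * f y) → f 0 = 0 := by
      intro f hf
      have := hf 0 0; simpa using this
    rw [e0 p0 hp0h, e0 p1 hp1h, e0 q0 hq0h, e0 r hrh]
    simp
  · have hny : 0 < ‖y‖ := norm_pos_iff.2 h0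
    obtain ⟨u, husph, hyu⟩ : ∃ u ∈ sph, y = ‖y‖ • u := by
      refine ⟨‖y‖⁻¹ • y, ?_, ?_⟩
      · have h1 : ‖‖y‖⁻¹ • y‖ = 1 := by
          rw [norm_smul]
          simp [abs_of_nonneg (inv_nonneg.2 (norm_nonneg y)), inv_mul_cancel₀ (ne_of_gt hny)]
        simpa [hsph] using h1
      · rw [smul_smul, mul_inv_cancel₀ (ne_of_gt hny), one_smul]
    have hsq : (0:ℝ) < ‖y‖^2 := by positivity
    obtain ⟨hL, hU⟩ := hsphereP u husph
    have hQ := hδ u husph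
    have e1 : p0 y = ‖y‖^2 * p0 u := by nth_rewrite 1 [hyu]; rw [hp0h]
    have e2 : p1 y = ‖y‖^2 * p1 u := by nth_rewrite 1 [hyu]; rw [hp1h]
    have e3 : q0 y = ‖y‖^2 * q0 u := by nth_rewrite 1 [hyu]; rw [hq0h]
    have e4 : r y = ‖y‖^2 * r u := by nth_rewrite 1 [hyu]; rw [hrh]
    have hh1 := mul_le_mul_of_nonneg_left hL (le_of_lt hsq)
    have hh2 := mul_le_mul_of_nonneg_left hU (le_of_lt hsq)
    have hh3 := mul_le_mul_of_nonneg_left hQ (le_of_lt hsq)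
    clear * - hh1 hh2 hh3 e1 e2 e3 e4 hsq hεpos
    refine ⟨?_, ?_, ?_⟩
    · rw [e1, e2]; nlinarith [hh1]
    · rw [e1, e2]; nlinarith [hh2]
    · rw [e3, e4]; nlinarith [hh3]

end StabAux

namespace StabAux3

lemma SSt {n : ℕ} (hn : 1 ≤ n) (S : Matrix (Fin n) (Fin (n-1)) ℝ)
    (hS : Sᵀ * S = 1) (hS1 : Sᵀ *ᵥ (fun _ => (1:ℝ)) = 0) :
    S * Sᵀ = 1 - ((n:ℝ))⁻¹ • (Matrix.of fun _ _ => (1:ℝ)) := by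
  have hn0 : (n:ℝ) ≠ 0 := Nat.cast_ne_zero.2 (by omega)
  have hS' : ∀ k k', (∑ i, S i k * S i k') = if k = k' then (1:ℝ) else 0 := by
    intro k k'
    have := congrFun (congrFun hS k) k'
    simpa [Matrix.mul_apply, Matrix.one_apply] using this
  have hS1' : ∀ k, (∑ i, S i k) = 0 := by
    intro k
    have := congrFun hS1 k
    simpa [Matrix.mulVec, dotProduct] using this
  have hcard : Fintype.card (Fin (n-1) ⊕ Unit) = Fintype.card (Fin n) := by
    simp [Nat.sub_add_cancel hn]
  set e : Fin (n-1) ⊕ Unit ≃ Fin n := Fintype.equivOfCardEq hcard with he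
  set c : ℝ := Real.sqrt ((n:ℝ))⁻¹ with hc
  have hc2 : c * c = ((n:ℝ))⁻¹ := Real.mul_self_sqrt (by positivity)
  set T0 : Matrix (Fin n) (Fin (n-1) ⊕ Unit) ℝ :=
    Matrix.of (fun i s => Sum.elim (fun k => S i k) (fun _ => c) s) with hT0def
  have hT0 : T0ᵀ * T0 = 1 := by
    ext s s'
    cases s with
    | inl k => cases s' with
      | inl k' =>
        simp only [Matrix.mul_apply, Matrix.transpose_apply, hT0def, Matrix.of_apply,
          Sum.elim_inl, Matrix.one_apply, Sum.inl.injEq]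
        rw [hS' k k']
      | inr u =>
        simp only [Matrix.mul_apply, Matrix.transpose_apply, hT0def, Matrix.of_apply,
          Sum.elim_inl, Sum.elim_inr, Matrix.one_apply]
        rw [← Finset.sum_mul, hS1' k]
        simp
    | inr u => cases s' with
      | inl k' =>
        simp only [Matrix.mul_apply, Matrix.transpose_apply, hT0def, Matrix.of_apply,
          Sum.elim_inl, Sum.elim_inr, Matrix.one_apply]
        rw [← Finset.mul_sum, hS1' k']
        simp
      | inr u' =>
        simp only [Matrix.mul_apply, Matrix.transpose_apply, hT0def, Matrix.of_apply,
          Sum.elim_inr, Matrix.one_apply]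
        rw [Finset.sum_const, Finset.card_fin]
        simp [hc2, hn0]
  set T : Matrix (Fin n) (Fin n) ℝ := T0.submatrix id e.symm with hTdef
  have hT : Tᵀ * T = 1 := by
    rw [hTdef, Matrix.transpose_submatrix,
      show (id : Fin n → Fin n) = ⇑(Equiv.refl (Fin n)) from rfl,
      Matrix.submatrix_mul_equiv, hT0, Matrix.submatrix_one_equiv]
  have hTT : T * Tᵀ = 1 := mul_eq_one_comm.mp hT
  ext i i'
  have h1 : (T * Tᵀ) i i' = (S * Sᵀ) i i' + ((n:ℝ))⁻¹ := by
    simp only [Matrix.mul_apply, Matrix.transpose_apply, hTdef, Matrix.submatrix_apply, id]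
    rw [← Equiv.sum_comp e (fun j => T0 i (e.symm j) * T0 i' (e.symm j))]
    simp only [Equiv.symm_apply_apply]
    rw [Fintype.sum_sum_type]
    simp [hT0def, hc2]
  have h2 := congrFun (congrFun hTT i) i'
  rw [h1] at h2
  simp only [Matrix.sub_apply, Matrix.smul_apply, Matrix.of_apply, smul_eq_mul, mul_one]
  linarith [h2]

lemma dot_SSt {n : ℕ} (hn : 1 ≤ n) (S : Matrix (Fin n) (Fin (n-1)) ℝ)
    (hS : Sᵀ * S = 1) (hS1 : Sᵀ *ᵥ (fun _ => (1:ℝ)) = 0)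
    (z u : Fin n → ℝ) (hz : z ⬝ᵥ (fun _ => (1:ℝ)) = 0) :
    z ⬝ᵥ (S *ᵥ (Sᵀ *ᵥ u)) = z ⬝ᵥ u := by
  have hzsum : (∑ i, z i) = 0 := by simpa [dotProduct] using hz
  rw [Matrix.mulVec_mulVec, SSt hn S hS hS1]
  rw [Matrix.sub_mulVec, dotProduct_sub]
  have h1 : ((((n:ℝ))⁻¹ • (Matrix.of fun _ _ => (1:ℝ)) : Matrix (Fin n) (Fin n) ℝ)) *ᵥ u
      = fun _ => ((n:ℝ))⁻¹ * (∑ j, u j) := by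
    funext i
    simp [Matrix.mulVec, dotProduct, Finset.mul_sum]
  have h2 : z ⬝ᵥ (fun _ => ((n:ℝ))⁻¹ * (∑ j, u j)) = 0 := by
    simp only [dotProduct]
    rw [← Finset.sum_mul, hzsum, zero_mul]
  rw [h1, h2, Matrix.one_mulVec, sub_zero]

end StabAux3


/-- Index type for the state `(ω̂, V̂, η, φ'')` of dimension `3n + (n-1)`. -/
abbrev Idx (n : ℕ) := (Fin n ⊕ Fin n) ⊕ (Fin n ⊕ Fin (n - 1))

/-- A connected-graph Laplacian: symmetric positive semidefinite, `L 1 = 0`,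
and the kernel is exactly the span of the all-ones vector. -/
def IsConnLaplacian {n : ℕ} (L : Matrix (Fin n) (Fin n) ℝ) : Prop :=
  L.PosSemidef ∧ L *ᵥ (fun _ => (1 : ℝ)) = 0 ∧
    ∀ v : Fin n → ℝ, L *ᵥ v = 0 → ∃ c : ℝ, v = fun _ => c

/-- The closed-loop system matrix `A` of the reduced dynamics
`(ω̂, V̂, η, φ'')`. -/
noncomputable def closedLoopA {n : ℕ}
    (M E Kw KV Kd KdI LR Leta Lphi : Matrix (Fin n) (Fin n) ℝ)
    (S : Matrix (Fin n) (Fin (n - 1)) ℝ) (Vnom γ : ℝ) :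
    Matrix (Idx n) (Idx n) ℝ :=
  Matrix.fromBlocks
    (Matrix.fromBlocks
      (-(M * (Kd + Kw))) (M * KV)
      ((1 / Vnom) • (E * Kw)) (-(E * (LR + (1 / Vnom) • KV))))
    (Matrix.fromBlocks
      (-(M * (KV * Kw⁻¹ * KdI))) (-(M * (Lphi * S)))
      0 ((1 / Vnom) • (E * (Lphi * S))))
    (Matrix.fromBlocks
      KdI 0
      (Sᵀ * KV⁻¹ * Kw) 0)
    (Matrix.fromBlocks
      (-Leta) 0
      0 (-(γ • (1 : Matrix (Fin (n - 1)) (Fin (n - 1)) ℝ))))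

namespace StabMain

variable {n : ℕ}

def wp (y : Idx n → ℝ) : Fin n → ℝ := fun i => y (Sum.inl (Sum.inl i))
def vp (y : Idx n → ℝ) : Fin n → ℝ := fun i => y (Sum.inl (Sum.inr i))
def ep (y : Idx n → ℝ) : Fin n → ℝ := fun i => y (Sum.inr (Sum.inl i))
def fp (y : Idx n → ℝ) : Fin (n-1) → ℝ := fun j => y (Sum.inr (Sum.inr j))

noncomputable def P0 (m e kw kv : Fin n → ℝ) (Lphi : Matrix (Fin n) (Fin n) ℝ)
    (S : Matrix (Fin n) (Fin (n-1)) ℝ) (Vnom : ℝ) : Matrix (Idx n) (Idx n) ℝ :=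
  Matrix.fromBlocks
    (Matrix.fromBlocks (Matrix.diagonal (fun i => kw i / (kv i * m i))) 0
      0 (Matrix.diagonal (fun i => Vnom / e i)))
    0 0
    (Matrix.fromBlocks 1 0 0 (Sᵀ * Lphi * S))

def Pc (n : ℕ) : Matrix (Idx n) (Idx n) ℝ :=
  Matrix.fromBlocks 0 (Matrix.fromBlocks 1 0 0 0) (Matrix.fromBlocks 1 0 0 0) 0

lemma dot_split (z f : Idx n → ℝ) :
    z ⬝ᵥ f = (∑ i, z (Sum.inl (Sum.inl i)) * f (Sum.inl (Sum.inl i)))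
      + (∑ i, z (Sum.inl (Sum.inr i)) * f (Sum.inl (Sum.inr i)))
      + ((∑ i, z (Sum.inr (Sum.inl i)) * f (Sum.inr (Sum.inl i)))
      + (∑ j, z (Sum.inr (Sum.inr j)) * f (Sum.inr (Sum.inr j)))) := by
  simp [dotProduct, Fintype.sum_sum_type]

lemma P0_mulVec (m e kw kv : Fin n → ℝ) (Lphi : Matrix (Fin n) (Fin n) ℝ)
    (S : Matrix (Fin n) (Fin (n-1)) ℝ) (Vnom : ℝ) (y : Idx n → ℝ) :
    (P0 m e kw kv Lphi S Vnom) *ᵥ y = Sum.elim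
      (Sum.elim (fun i => kw i / (kv i * m i) * wp y i) (fun i => Vnom / e i * vp y i))
      (Sum.elim (ep y) (fun j => (Sᵀ *ᵥ (Lphi *ᵥ (S *ᵥ fp y))) j)) := by
  funext idx
  rcases idx with (i | i) | (i | j) <;>
    simp [P0, Matrix.fromBlocks_mulVec, Matrix.mulVec_diagonal, wp, vp, ep, fp,
      Matrix.mulVec_mulVec, Matrix.mul_assoc, Function.comp]
  rfl

lemma Pc_mulVec (y : Idx n → ℝ) :
    (Pc n) *ᵥ y = Sum.elim (Sum.elim (ep y) 0) (Sum.elim (wp y) 0) := by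
  funext idx
  rcases idx with (i | i) | (i | j) <;>
    simp [Pc, Matrix.fromBlocks_mulVec, wp, vp, ep, fp]

lemma Pc_quad (z y : Idx n → ℝ) :
    z ⬝ᵥ ((Pc n) *ᵥ y) = (wp z) ⬝ᵥ (ep y) + (ep z) ⬝ᵥ (wp y) := by
  rw [Pc_mulVec, dot_split]
  simp [dotProduct, wp, vp, ep, fp]

lemma P0_quad (m e kw kv : Fin n → ℝ) (Lphi : Matrix (Fin n) (Fin n) ℝ)
    (S : Matrix (Fin n) (Fin (n-1)) ℝ) (Vnom : ℝ) (z y : Idx n → ℝ) :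
    z ⬝ᵥ ((P0 m e kw kv Lphi S Vnom) *ᵥ y)
      = (∑ i, kw i / (kv i * m i) * wp z i * wp y i)
      + (∑ i, Vnom / e i * vp z i * vp y i)
      + ((ep z) ⬝ᵥ (ep y)
      + (S *ᵥ fp z) ⬝ᵥ (Lphi *ᵥ (S *ᵥ fp y))) := by
  rw [P0_mulVec, dot_split]
  simp only [Sum.elim_inl, Sum.elim_inr]
  have h1 : (∑ j, z (Sum.inr (Sum.inr j)) * (Sᵀ *ᵥ (Lphi *ᵥ (S *ᵥ fp y))) j)
      = (S *ᵥ fp z) ⬝ᵥ (Lphi *ᵥ (S *ᵥ fp y)) := by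
    have h0 : (∑ j, z (Sum.inr (Sum.inr j)) * (Sᵀ *ᵥ (Lphi *ᵥ (S *ᵥ fp y))) j)
        = (fp z) ⬝ᵥ (Sᵀ *ᵥ (Lphi *ᵥ (S *ᵥ fp y))) := rfl
    rw [h0, Matrix.dotProduct_mulVec, Matrix.vecMul_transpose]
  have h2 : (∑ i, z (Sum.inr (Sum.inl i)) * ep y i) = (ep z) ⬝ᵥ (ep y) := rfl
  rw [h1, h2]
  have h3 : (∑ i, z (Sum.inl (Sum.inl i)) * (kw i / (kv i * m i) * wp y i))
      = ∑ i, kw i / (kv i * m i) * wp z i * wp y i :=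
    Finset.sum_congr rfl fun i _ => by simp [wp]; ring
  have h4 : (∑ i, z (Sum.inl (Sum.inr i)) * (Vnom / e i * vp y i))
      = ∑ i, Vnom / e i * vp z i * vp y i :=
    Finset.sum_congr rfl fun i _ => by simp [vp]; ring
  rw [h3, h4]

lemma dot_mulVec_symm {ι : Type*} [Fintype ι] {L : Matrix ι ι ℝ} (h : Lᵀ = L)
    (a b : ι → ℝ) : a ⬝ᵥ (L *ᵥ b) = b ⬝ᵥ (L *ᵥ a) := by
  rw [Matrix.dotProduct_mulVec]
  conv_lhs => rw [← h, Matrix.vecMul_transpose]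
  exact dotProduct_comm _ _


lemma diag_mulVec (d p : Fin n → ℝ) :
    (Matrix.diagonal d) *ᵥ p = fun i => d i * p i :=
  funext fun i => Matrix.mulVec_diagonal d p i

lemma inv_diag (d : Fin n → ℝ) (hd : ∀ i, d i ≠ 0) :
    (Matrix.diagonal d)⁻¹ = Matrix.diagonal (fun i => (d i)⁻¹) := by
  apply Matrix.inv_eq_right_inv
  rw [Matrix.diagonal_mul_diagonal]
  have : (fun i => d i * (d i)⁻¹) = fun _ => (1:ℝ) := by
    funext i; exact mul_inv_cancel₀ (hd i)
  rw [this, Matrix.diagonal_one]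

lemma comp_ww (y : Idx n → ℝ) : (y ∘ Sum.inl) ∘ Sum.inl = wp y := rfl
lemma comp_vv (y : Idx n → ℝ) : (y ∘ Sum.inl) ∘ Sum.inr = vp y := rfl
lemma comp_ee (y : Idx n → ℝ) : (y ∘ Sum.inr) ∘ Sum.inl = ep y := rfl
lemma comp_ff (y : Idx n → ℝ) : (y ∘ Sum.inr) ∘ Sum.inr = fp y := rfl

lemma A_mulVec (m e kw kv kd kdi : Fin n → ℝ)
    (hkw : ∀ i, kw i ≠ 0) (hkv : ∀ i, kv i ≠ 0)
    (LR Leta Lphi : Matrix (Fin n) (Fin n) ℝ)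
    (S : Matrix (Fin n) (Fin (n-1)) ℝ) (Vnom γ : ℝ) (y : Idx n → ℝ) :
    (closedLoopA (Matrix.diagonal m) (Matrix.diagonal e) (Matrix.diagonal kw)
      (Matrix.diagonal kv) (Matrix.diagonal kd) (Matrix.diagonal kdi)
      LR Leta Lphi S Vnom γ) *ᵥ y
    = Sum.elim (Sum.elim
        (fun i => -(m i * ((kd i + kw i) * wp y i)) + m i * (kv i * vp y i)
            - m i * (kv i * ((kw i)⁻¹ * (kdi i * ep y i)))
            - m i * ((Lphi *ᵥ (S *ᵥ fp y)) i))
        (fun i => (1/Vnom) * (e i * (kw i * wp y i))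
            - (e i * ((LR *ᵥ vp y) i) + (1/Vnom) * (e i * (kv i * vp y i)))
            + (1/Vnom) * (e i * ((Lphi *ᵥ (S *ᵥ fp y)) i))))
      (Sum.elim
        (fun i => kdi i * wp y i - (Leta *ᵥ ep y) i)
        (fun j => (Sᵀ *ᵥ (fun i => (kv i)⁻¹ * (kw i * wp y i))) j - γ * fp y j)) := by
  funext idx
  rcases idx with (i | i) | (i | j) <;>
    simp [closedLoopA, Matrix.fromBlocks_mulVec, Matrix.neg_mulVec, Matrix.add_mulVec,
      Matrix.smul_mulVec, ← Matrix.mulVec_mulVec, diag_mulVec,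
      inv_diag kw hkw, inv_diag kv hkv, comp_ww, comp_vv, comp_ee, comp_ff,
      Matrix.one_mulVec] <;>
    ring

lemma wp_def (y : Idx n → ℝ) : wp y = fun i => y (Sum.inl (Sum.inl i)) := rfl
lemma vp_def (y : Idx n → ℝ) : vp y = fun i => y (Sum.inl (Sum.inr i)) := rfl
lemma ep_def (y : Idx n → ℝ) : ep y = fun i => y (Sum.inr (Sum.inl i)) := rfl
lemma fp_def (y : Idx n → ℝ) : fp y = fun j => y (Sum.inr (Sum.inr j)) := rfl

lemma P0_quad_symm (m e kw kv : Fin n → ℝ) (Lphi : Matrix (Fin n) (Fin n) ℝ)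
    (hLphisym : Lphiᵀ = Lphi)
    (S : Matrix (Fin n) (Fin (n-1)) ℝ) (Vnom : ℝ) (z y : Idx n → ℝ) :
    z ⬝ᵥ ((P0 m e kw kv Lphi S Vnom) *ᵥ y) = y ⬝ᵥ ((P0 m e kw kv Lphi S Vnom) *ᵥ z) := by
  rw [P0_quad, P0_quad]
  have h1 : (∑ i, kw i / (kv i * m i) * wp z i * wp y i)
      = ∑ i, kw i / (kv i * m i) * wp y i * wp z i :=
    Finset.sum_congr rfl fun i _ => by ring
  have h2 : (∑ i, Vnom / e i * vp z i * vp y i)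
      = ∑ i, Vnom / e i * vp y i * vp z i :=
    Finset.sum_congr rfl fun i _ => by ring
  rw [h1, h2, dotProduct_comm (ep z) (ep y), dot_mulVec_symm hLphisym]

end StabMain


set_option maxHeartbeats 2000000 in
/-- Theorem 1: under Assumptions 1 and 2, the origin of `ẋ = A x` is globally
asymptotically stable: every solution converges to `0`. -/
theorem stmt_0 {n : ℕ} (hn : 2 ≤ n)
    (m e kw kv kd kdi : Fin n → ℝ)
    (hm : ∀ i, 0 < m i) (he : ∀ i, 0 < e i) (hkw : ∀ i, 0 < kw i)
    (hkv : ∀ i, 0 < kv i) (hkd : ∀ i, 0 < kd i) (hkdi : ∀ i, 0 < kdi i)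
    (LR Leta Lphi : Matrix (Fin n) (Fin n) ℝ)
    (hLR : IsConnLaplacian LR) (hLeta : IsConnLaplacian Leta)
    (hLphi : IsConnLaplacian Lphi)
    (S : Matrix (Fin n) (Fin (n - 1)) ℝ)
    (hS : Sᵀ * S = 1) (hS1 : Sᵀ *ᵥ (fun _ => (1 : ℝ)) = 0)
    (Vnom γ kphi : ℝ) (hVnom : 0 < Vnom) (hγ : 0 < γ) (hkphi : 0 < kphi)
    -- Assumption 1
    (hass1 : Lphi = kphi • LR)
    -- Assumption 2
    (hass2 : γ > kphi / (4 * Vnom))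
    (A : Matrix (Idx n) (Idx n) ℝ)
    (hA : A = closedLoopA (Matrix.diagonal m) (Matrix.diagonal e)
      (Matrix.diagonal kw) (Matrix.diagonal kv) (Matrix.diagonal kd)
      (Matrix.diagonal kdi) LR Leta Lphi S Vnom γ)
    (x : ℝ → (Idx n → ℝ))
    (hx : ∀ t : ℝ, HasDerivAt x (A *ᵥ (x t)) t) :
    Tendsto x atTop (nhds 0) := by
  haveI : Nonempty (Idx n) := ⟨Sum.inl (Sum.inl ⟨0, by omega⟩)⟩
  have hn1 : 1 ≤ n := by omega
  have hm0 : ∀ i, m i ≠ 0 := fun i => ne_of_gt (hm i)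
  have he0 : ∀ i, e i ≠ 0 := fun i => ne_of_gt (he i)
  have hkw0 : ∀ i, kw i ≠ 0 := fun i => ne_of_gt (hkw i)
  have hkv0 : ∀ i, kv i ≠ 0 := fun i => ne_of_gt (hkv i)
  have hV0 : Vnom ≠ 0 := ne_of_gt hVnom
  subst hass1
  have hLRsym : LRᵀ = LR := by
    have h : LRᴴ = LR := hLR.1.1
    rwa [Matrix.conjTranspose_eq_transpose_of_trivial] at h
  have hLphisym : (kphi • LR)ᵀ = kphi • LR := by rw [Matrix.transpose_smul, hLRsym]
  have hLRpsd : LR.PosSemidef := hLR.1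
  have hLetapsd : Leta.PosSemidef := hLeta.1
  -- A *ᵥ y description
  have hAv : ∀ y : Idx n → ℝ, A *ᵥ y = Sum.elim (Sum.elim
        (fun i => -(m i * ((kd i + kw i) * StabMain.wp y i)) + m i * (kv i * StabMain.vp y i)
            - m i * (kv i * ((kw i)⁻¹ * (kdi i * StabMain.ep y i)))
            - m i * (((kphi • LR) *ᵥ (S *ᵥ StabMain.fp y)) i))
        (fun i => (1/Vnom) * (e i * (kw i * StabMain.wp y i))
            - (e i * ((LR *ᵥ StabMain.vp y) i) + (1/Vnom) * (e i * (kv i * StabMain.vp y i)))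
            + (1/Vnom) * (e i * (((kphi • LR) *ᵥ (S *ᵥ StabMain.fp y)) i))))
      (Sum.elim
        (fun i => kdi i * StabMain.wp y i - (Leta *ᵥ StabMain.ep y) i)
        (fun j => (Sᵀ *ᵥ (fun i => (kv i)⁻¹ * (kw i * StabMain.wp y i))) j
            - γ * StabMain.fp y j)) := by
    intro y
    rw [hA]
    exact StabMain.A_mulVec m e kw kv kd kdi hkw0 hkv0 LR Leta (kphi • LR) S Vnom γ y
  -- ones-orthogonality helper
  have hones : ∀ q : Fin (n-1) → ℝ, (LR *ᵥ (S *ᵥ q)) ⬝ᵥ (fun _ => (1:ℝ)) = 0 := by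
    intro q
    rw [dotProduct_comm, StabMain.dot_mulVec_symm hLRsym, hLR.2.1,
      dotProduct_zero]
  -- key identity for the q0-form (half of it)
  have key : ∀ y : Idx n → ℝ,
      y ⬝ᵥ (StabMain.P0 m e kw kv (kphi • LR) S Vnom *ᵥ (A *ᵥ y)) =
        -(∑ i, kw i * (kd i + kw i) / kv i * y (Sum.inl (Sum.inl i)) ^ 2) + 2 * (∑ i, kw i * y (Sum.inl (Sum.inl i)) * y (Sum.inl (Sum.inr i))) - (∑ i, kv i * y (Sum.inl (Sum.inr i)) ^ 2) - Vnom * ((fun i => y (Sum.inl (Sum.inr i))) ⬝ᵥ (LR *ᵥ (fun i => y (Sum.inl (Sum.inr i))))) + kphi * ((fun i => y (Sum.inl (Sum.inr i))) ⬝ᵥ (LR *ᵥ (S *ᵥ fun j => y (Sum.inr (Sum.inr j))))) - γ * (kphi * ((S *ᵥ fun j => y (Sum.inr (Sum.inr j))) ⬝ᵥ (LR *ᵥ (S *ᵥ fun j => y (Sum.inr (Sum.inr j)))))) - ((fun i => y (Sum.inr (Sum.inl i))) ⬝ᵥ (Leta *ᵥ (fun i => y (Sum.inr (Sum.inl i)))))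 := by
    intro y
    rw [hAv y, StabMain.P0_quad]
    simp only [StabMain.wp_def, StabMain.vp_def, StabMain.ep_def, StabMain.fp_def,
      Sum.elim_inl, Sum.elim_inr]
    have hp1 : (∑ i, kw i / (kv i * m i) * y (Sum.inl (Sum.inl i)) * (-(m i * ((kd i + kw i) * y (Sum.inl (Sum.inl i)))) + m i * (kv i * y (Sum.inl (Sum.inr i))) - m i * (kv i * ((kw i)⁻¹ * (kdi i * y (Sum.inr (Sum.inl i))))) - m i * (((kphi • LR) *ᵥ (S *ᵥ fun j => y (Sum.inr (Sum.inr j)))) i)))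
        = ((-(∑ i, kw i * (kd i + kw i) / kv i * y (Sum.inl (Sum.inl i)) ^ 2) + (∑ i, kw i * y (Sum.inl (Sum.inl i)) * y (Sum.inl (Sum.inr i)))) - (∑ i, kdi i * y (Sum.inl (Sum.inl i)) * y (Sum.inr (Sum.inl i)))) - kphi * (∑ i, (kv i)⁻¹ * kw i * y (Sum.inl (Sum.inl i)) * (LR *ᵥ (S *ᵥ fun j => y (Sum.inr (Sum.inr j)))) i) := by
      have he1 : ∀ i ∈ Finset.univ, kw i / (kv i * m i) * y (Sum.inl (Sum.inl i)) * (-(m i * ((kd i + kw i) * y (Sum.inl (Sum.inl i)))) + m i * (kv i * y (Sum.inl (Sum.inr i))) - m i * (kv i * ((kw i)⁻¹ * (kdi i * y (Sum.inr (Sum.inl i))))) - m i * (((kphi • LR) *ᵥ (S *ᵥ fun j => y (Sum.inr (Sum.inr j)))) i))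
          = ((-(kw i * (kd i + kw i) / kv i * y (Sum.inl (Sum.inl i)) ^ 2)
            + kw i * y (Sum.inl (Sum.inl i)) * y (Sum.inl (Sum.inr i)))
            - kdi i * y (Sum.inl (Sum.inl i)) * y (Sum.inr (Sum.inl i)))
            - kphi * ((kv i)⁻¹ * kw i * y (Sum.inl (Sum.inl i)) * (LR *ᵥ (S *ᵥ fun j => y (Sum.inr (Sum.inr j)))) i) := by
        intro i _
        have hsm : ((kphi • LR) *ᵥ (S *ᵥ fun j => y (Sum.inr (Sum.inr j)))) i = kphi * (LR *ᵥ (S *ᵥ fun j => y (Sum.inr (Sum.inr j)))) i := by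
          rw [Matrix.smul_mulVec]; simp
        rw [hsm]
        have h1 := hkv0 i; have h2 := hm0 i; have h3 := hkw0 i
        field_simp
      rw [Finset.sum_congr rfl he1, Finset.sum_sub_distrib, Finset.sum_sub_distrib,
        Finset.sum_add_distrib, Finset.sum_neg_distrib, ← Finset.mul_sum]
    have hp2 : (∑ i, Vnom / e i * y (Sum.inl (Sum.inr i)) * ((1/Vnom) * (e i * (kw i * y (Sum.inl (Sum.inl i)))) - (e i * ((LR *ᵥ (fun i => y (Sum.inl (Sum.inr i)))) i) + (1/Vnom) * (e i * (kv i * y (Sum.inl (Sum.inr i))))) + (1/Vnom) * (e i * (((kphi • LR) *ᵥ (S *ᵥ fun j => y (Sum.inr (Sum.inr j)))) i))))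
        = (((∑ i, kw i * y (Sum.inl (Sum.inl i)) * y (Sum.inl (Sum.inr i))) - (∑ i, kv i * y (Sum.inl (Sum.inr i)) ^ 2)) - Vnom * (∑ i, y (Sum.inl (Sum.inr i)) * (LR *ᵥ (fun i => y (Sum.inl (Sum.inr i)))) i))
          + kphi * (∑ i, y (Sum.inl (Sum.inr i)) * (LR *ᵥ (S *ᵥ fun j => y (Sum.inr (Sum.inr j)))) i) := by
      have he2 : ∀ i ∈ Finset.univ, Vnom / e i * y (Sum.inl (Sum.inr i)) * ((1/Vnom) * (e i * (kw i * y (Sum.inl (Sum.inl i)))) - (e i * ((LR *ᵥ (fun i => y (Sum.inl (Sum.inr i)))) i) + (1/Vnom) * (e i * (kv i * y (Sum.inl (Sum.inr i))))) + (1/Vnom) * (e i * (((kphi • LR) *ᵥ (S *ᵥ fun j => y (Sum.inr (Sum.inr j)))) i)))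
          = ((kw i * y (Sum.inl (Sum.inl i)) * y (Sum.inl (Sum.inr i))
            - kv i * y (Sum.inl (Sum.inr i)) ^ 2)
            - Vnom * (y (Sum.inl (Sum.inr i)) * (LR *ᵥ (fun i => y (Sum.inl (Sum.inr i)))) i))
            + kphi * (y (Sum.inl (Sum.inr i)) * (LR *ᵥ (S *ᵥ fun j => y (Sum.inr (Sum.inr j)))) i) := by
        intro i _
        have hsm : ((kphi • LR) *ᵥ (S *ᵥ fun j => y (Sum.inr (Sum.inr j)))) i = kphi * (LR *ᵥ (S *ᵥ fun j => y (Sum.inr (Sum.inr j)))) i := by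
          rw [Matrix.smul_mulVec]; simp
        rw [hsm]
        have h1 := he0 i
        field_simp
        ring
      rw [Finset.sum_congr rfl he2, Finset.sum_add_distrib, Finset.sum_sub_distrib,
        Finset.sum_sub_distrib, ← Finset.mul_sum, ← Finset.mul_sum]
    have hp3 : (fun i => y (Sum.inr (Sum.inl i))) ⬝ᵥ (fun i => kdi i * y (Sum.inl (Sum.inl i)) - (Leta *ᵥ (fun i => y (Sum.inr (Sum.inl i)))) i) = (∑ i, kdi i * y (Sum.inl (Sum.inl i)) * y (Sum.inr (Sum.inl i))) - ((fun i => y (Sum.inr (Sum.inl i))) ⬝ᵥ (Leta *ᵥ (fun i => y (Sum.inr (Sum.inl i))))) := by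
      have h0 : (fun i => y (Sum.inr (Sum.inl i))) ⬝ᵥ (fun i => kdi i * y (Sum.inl (Sum.inl i)) - (Leta *ᵥ (fun i => y (Sum.inr (Sum.inl i)))) i)
          = ∑ i, y (Sum.inr (Sum.inl i)) * (kdi i * y (Sum.inl (Sum.inl i))
              - (Leta *ᵥ (fun i => y (Sum.inr (Sum.inl i)))) i) := rfl
      have h1 : ((fun i => y (Sum.inr (Sum.inl i))) ⬝ᵥ (Leta *ᵥ (fun i => y (Sum.inr (Sum.inl i))))) = ∑ i, y (Sum.inr (Sum.inl i)) * (Leta *ᵥ (fun i => y (Sum.inr (Sum.inl i)))) i := rfl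
      rw [h0, h1, ← Finset.sum_sub_distrib]
      refine Finset.sum_congr rfl fun i _ => by ring
    have hp4 : (S *ᵥ fun j => y (Sum.inr (Sum.inr j))) ⬝ᵥ ((kphi • LR) *ᵥ (S *ᵥ (fun j => (Sᵀ *ᵥ (fun i => (kv i)⁻¹ * (kw i * y (Sum.inl (Sum.inl i))))) j - γ * y (Sum.inr (Sum.inr j)))))
        = kphi * (∑ i, (kv i)⁻¹ * kw i * y (Sum.inl (Sum.inl i)) * (LR *ᵥ (S *ᵥ fun j => y (Sum.inr (Sum.inr j)))) i) - γ * (kphi * ((S *ᵥ fun j => y (Sum.inr (Sum.inr j))) ⬝ᵥ (LR *ᵥ (S *ᵥ fun j => y (Sum.inr (Sum.inr j)))))) := by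
      have hfrow : (fun j => (Sᵀ *ᵥ (fun i => (kv i)⁻¹ * (kw i * y (Sum.inl (Sum.inl i))))) j - γ * y (Sum.inr (Sum.inr j))) = (Sᵀ *ᵥ (fun i => (kv i)⁻¹ * (kw i * y (Sum.inl (Sum.inl i))))) - γ • (fun j => y (Sum.inr (Sum.inr j))) := by
        funext j; simp
      rw [hfrow, Matrix.mulVec_sub, Matrix.mulVec_smul, Matrix.smul_mulVec,
        Matrix.mulVec_sub, Matrix.mulVec_smul, dotProduct_smul,
        dotProduct_sub, dotProduct_smul]
      have hmain : (S *ᵥ fun j => y (Sum.inr (Sum.inr j))) ⬝ᵥ (LR *ᵥ (S *ᵥ (Sᵀ *ᵥ (fun i => (kv i)⁻¹ * (kw i * y (Sum.inl (Sum.inl i))))))) = (∑ i, (kv i)⁻¹ * kw i * y (Sum.inl (Sum.inl i)) * (LR *ᵥ (S *ᵥ fun j => y (Sum.inr (Sum.inr j)))) i) := by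
        rw [StabMain.dot_mulVec_symm hLRsym, dotProduct_comm,
          StabAux3.dot_SSt hn1 S hS hS1 _ _ (hones (fun j => y (Sum.inr (Sum.inr j))))]
        have h0 : (LR *ᵥ (S *ᵥ fun j => y (Sum.inr (Sum.inr j)))) ⬝ᵥ (fun i => (kv i)⁻¹ * (kw i * y (Sum.inl (Sum.inl i))))
            = ∑ i, (LR *ᵥ (S *ᵥ fun j => y (Sum.inr (Sum.inr j)))) i * ((kv i)⁻¹ * (kw i * y (Sum.inl (Sum.inl i)))) := rfl
        rw [h0]
        refine Finset.sum_congr rfl fun i _ => by ring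
      rw [hmain]
      simp only [smul_eq_mul]
      ring
    have hb1 : (∑ i, y (Sum.inl (Sum.inr i)) * (LR *ᵥ (fun i => y (Sum.inl (Sum.inr i)))) i) = ((fun i => y (Sum.inl (Sum.inr i))) ⬝ᵥ (LR *ᵥ (fun i => y (Sum.inl (Sum.inr i))))) := rfl
    have hb2 : (∑ i, y (Sum.inl (Sum.inr i)) * (LR *ᵥ (S *ᵥ fun j => y (Sum.inr (Sum.inr j)))) i) = ((fun i => y (Sum.inl (Sum.inr i))) ⬝ᵥ (LR *ᵥ (S *ᵥ fun j => y (Sum.inr (Sum.inr j))))) := rfl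
    rw [hb1] at hp2
    rw [hb2] at hp2
    linarith [hp1, hp2, hp3, hp4]
    -- symmetric form
  have hq2 : ∀ y : Idx n → ℝ,
      (A *ᵥ y) ⬝ᵥ ((StabMain.P0 m e kw kv (kphi • LR) S Vnom) *ᵥ y) + y ⬝ᵥ ((StabMain.P0 m e kw kv (kphi • LR) S Vnom) *ᵥ (A *ᵥ y))
        = 2 * (y ⬝ᵥ ((StabMain.P0 m e kw kv (kphi • LR) S Vnom) *ᵥ (A *ᵥ y))) := by
    intro y
    rw [StabMain.P0_quad_symm m e kw kv (kphi • LR) hLphisym S Vnom (A *ᵥ y) y]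
    ring
  -- pure-sum identity
  have hAid : ∀ y : Idx n → ℝ, (∑ i, kw i * (kd i + kw i) / kv i * y (Sum.inl (Sum.inl i)) ^ 2) - 2 * (∑ i, kw i * y (Sum.inl (Sum.inl i)) * y (Sum.inl (Sum.inr i))) + (∑ i, kv i * y (Sum.inl (Sum.inr i)) ^ 2) = (∑ i, kw i * kd i / kv i * y (Sum.inl (Sum.inl i)) ^ 2) + (∑ i, (kw i * y (Sum.inl (Sum.inl i)) - kv i * y (Sum.inl (Sum.inr i))) ^ 2 / kv i) := by
    intro y
    have h1 : (∑ i, kw i * kd i / kv i * y (Sum.inl (Sum.inl i)) ^ 2) + (∑ i, (kw i * y (Sum.inl (Sum.inl i)) - kv i * y (Sum.inl (Sum.inr i))) ^ 2 / kv i) = ∑ i, (kw i * kd i / kv i * y (Sum.inl (Sum.inl i)) ^ 2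
        + (kw i * y (Sum.inl (Sum.inl i)) - kv i * y (Sum.inl (Sum.inr i))) ^ 2 / kv i) := by
      rw [Finset.sum_add_distrib]
    have h2 : ∀ i ∈ Finset.univ, kw i * kd i / kv i * y (Sum.inl (Sum.inl i)) ^ 2
        + (kw i * y (Sum.inl (Sum.inl i)) - kv i * y (Sum.inl (Sum.inr i))) ^ 2 / kv i
        = kw i * (kd i + kw i) / kv i * y (Sum.inl (Sum.inl i)) ^ 2
          - 2 * (kw i * y (Sum.inl (Sum.inl i)) * y (Sum.inl (Sum.inr i)))
          + kv i * y (Sum.inl (Sum.inr i)) ^ 2 := by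
      intro i _
      have h := hkv0 i
      field_simp
      ring
    rw [h1, Finset.sum_congr rfl h2, Finset.sum_add_distrib, Finset.sum_sub_distrib,
      ← Finset.mul_sum]
  -- scaled expansion of the completed square
  have hrvS : ∀ y : Idx n → ℝ, 4 * Vnom^2 * (((fun i => y (Sum.inl (Sum.inr i))) - (kphi/(2*Vnom)) • (S *ᵥ fun j => y (Sum.inr (Sum.inr j)))) ⬝ᵥ (LR *ᵥ ((fun i => y (Sum.inl (Sum.inr i))) - (kphi/(2*Vnom)) • (S *ᵥ fun j => y (Sum.inr (Sum.inr j))))))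
      = 4 * Vnom^2 * ((fun i => y (Sum.inl (Sum.inr i))) ⬝ᵥ (LR *ᵥ (fun i => y (Sum.inl (Sum.inr i))))) - 4 * Vnom * kphi * ((fun i => y (Sum.inl (Sum.inr i))) ⬝ᵥ (LR *ᵥ (S *ᵥ fun j => y (Sum.inr (Sum.inr j))))) + kphi^2 * ((S *ᵥ fun j => y (Sum.inr (Sum.inr j))) ⬝ᵥ (LR *ᵥ (S *ᵥ fun j => y (Sum.inr (Sum.inr j))))) := by
    intro y
    rw [Matrix.mulVec_sub, Matrix.mulVec_smul, sub_dotProduct,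
      smul_dotProduct, dotProduct_sub, dotProduct_smul,
      dotProduct_sub, dotProduct_smul,
      StabMain.dot_mulVec_symm hLRsym (S *ᵥ fun j => y (Sum.inr (Sum.inr j))) (fun i => y (Sum.inl (Sum.inr i)))]
    simp only [smul_eq_mul]
    field_simp
    ring
  have h4Vg : kphi < γ * (4 * Vnom) := (div_lt_iff₀ (by positivity)).mp hass2
  -- step inequality
  have hstep : ∀ y : Idx n → ℝ, 0 ≤ Vnom * ((fun i => y (Sum.inl (Sum.inr i))) ⬝ᵥ (LR *ᵥ (fun i => y (Sum.inl (Sum.inr i))))) - kphi * ((fun i => y (Sum.inl (Sum.inr i))) ⬝ᵥ (LR *ᵥ (S *ᵥ fun j => y (Sum.inr (Sum.inr j))))) + γ * (kphi * ((S *ᵥ fun j => y (Sum.inr (Sum.inr j))) ⬝ᵥ (LR *ᵥ (S *ᵥ fun j => y (Sum.inr (Sum.inr j)))))) := by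
    intro y
    have h5 := hrvS y
    have hBrv : 0 ≤ ((fun i => y (Sum.inl (Sum.inr i))) - (kphi/(2*Vnom)) • (S *ᵥ fun j => y (Sum.inr (Sum.inr j)))) ⬝ᵥ (LR *ᵥ ((fun i => y (Sum.inl (Sum.inr i))) - (kphi/(2*Vnom)) • (S *ᵥ fun j => y (Sum.inr (Sum.inr j))))) := StabAux.psd_form_nonneg hLRpsd _
    have hSPn : 0 ≤ ((S *ᵥ fun j => y (Sum.inr (Sum.inr j))) ⬝ᵥ (LR *ᵥ (S *ᵥ fun j => y (Sum.inr (Sum.inr j))))) := StabAux.psd_form_nonneg hLRpsd _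
    have hextra : 0 ≤ (γ * (4 * Vnom) - kphi) * (kphi * ((S *ᵥ fun j => y (Sum.inr (Sum.inr j))) ⬝ᵥ (LR *ᵥ (S *ᵥ fun j => y (Sum.inr (Sum.inr j)))))) :=
      mul_nonneg (by linarith) (mul_nonneg hkphi.le hSPn)
    have h6 : 0 ≤ 4 * Vnom * (Vnom * ((fun i => y (Sum.inl (Sum.inr i))) ⬝ᵥ (LR *ᵥ (fun i => y (Sum.inl (Sum.inr i))))) - kphi * ((fun i => y (Sum.inl (Sum.inr i))) ⬝ᵥ (LR *ᵥ (S *ᵥ fun j => y (Sum.inr (Sum.inr j))))) + γ * (kphi * ((S *ᵥ fun j => y (Sum.inr (Sum.inr j))) ⬝ᵥ (LR *ᵥ (S *ᵥ fun j => y (Sum.inr (Sum.inr j))))))) := by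
      nlinarith [h5, hBrv, hextra]
    exact nonneg_of_mul_nonneg_right h6 (by positivity)
  -- q0 is nonpositive
  have hq0neg : ∀ y : Idx n → ℝ,
      (A *ᵥ y) ⬝ᵥ ((StabMain.P0 m e kw kv (kphi • LR) S Vnom) *ᵥ y) + y ⬝ᵥ ((StabMain.P0 m e kw kv (kphi • LR) S Vnom) *ᵥ (A *ᵥ y)) ≤ 0 := by
    intro y
    rw [hq2 y, key y]
    have h1 := hAid y
    have h2 := hstep y
    have hQAn : 0 ≤ (∑ i, kw i * kd i / kv i * y (Sum.inl (Sum.inl i)) ^ 2) :=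
      Finset.sum_nonneg fun i _ =>
        mul_nonneg (div_nonneg (mul_nonneg (hkw i).le (hkd i).le) (hkv i).le) (sq_nonneg _)
    have hQBn : 0 ≤ (∑ i, (kw i * y (Sum.inl (Sum.inl i)) - kv i * y (Sum.inl (Sum.inr i))) ^ 2 / kv i) :=
      Finset.sum_nonneg fun i _ => div_nonneg (sq_nonneg _) (hkv i).le
    have hSEn : 0 ≤ ((fun i => y (Sum.inr (Sum.inl i))) ⬝ᵥ (Leta *ᵥ (fun i => y (Sum.inr (Sum.inl i))))) := StabAux.psd_form_nonneg hLetapsd _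
    linarith
  -- p0 positivity helper : SP = 0 forces the phi-part to vanish
  have hpsizero : ∀ q : Fin (n-1) → ℝ, (S *ᵥ q) ⬝ᵥ (LR *ᵥ (S *ᵥ q)) = 0 → q = 0 := by
    intro q hq
    have h1 : LR *ᵥ (S *ᵥ q) = 0 := StabAux.psd_form_eq_zero hLRpsd hq
    obtain ⟨cst, hcst⟩ := hLR.2.2 _ h1
    have h2 : (S *ᵥ q) ⬝ᵥ (fun _ => (1:ℝ)) = 0 := by
      rw [dotProduct_comm, Matrix.dotProduct_mulVec, ← Matrix.mulVec_transpose, hS1,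
        zero_dotProduct]
    rw [hcst] at h2
    have h3 : (cst : ℝ) * n = 0 := by
      simpa [dotProduct, Finset.sum_const, mul_comm] using h2
    have hcst0 : cst = 0 := by
      rcases mul_eq_zero.1 h3 with h | h
      · exact h
      · exact absurd h (Nat.cast_ne_zero.2 (by omega))
    have h4 : S *ᵥ q = 0 := by rw [hcst, hcst0]; funext i; simp
    have h5 : q = Sᵀ *ᵥ (S *ᵥ q) := by
      rw [Matrix.mulVec_mulVec, hS, Matrix.one_mulVec]
    rw [h5, h4, Matrix.mulVec_zero]
  -- expansion of the p0 form
  have hp0exp : ∀ y : Idx n → ℝ, y ⬝ᵥ ((StabMain.P0 m e kw kv (kphi • LR) S Vnom) *ᵥ y)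
      = (∑ i, kw i / (kv i * m i) * y (Sum.inl (Sum.inl i)) ^ 2)
      + (∑ i, Vnom / e i * y (Sum.inl (Sum.inr i)) ^ 2)
      + (((fun i => y (Sum.inr (Sum.inl i))) ⬝ᵥ (fun i => y (Sum.inr (Sum.inl i)))) + kphi * ((S *ᵥ fun j => y (Sum.inr (Sum.inr j))) ⬝ᵥ (LR *ᵥ (S *ᵥ fun j => y (Sum.inr (Sum.inr j)))))) := by
    intro y
    rw [StabMain.P0_quad]
    simp only [StabMain.wp_def, StabMain.vp_def, StabMain.ep_def, StabMain.fp_def,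
      Matrix.smul_mulVec, dotProduct_smul, smul_eq_mul]
    have h1 : (∑ i, kw i / (kv i * m i) * y (Sum.inl (Sum.inl i)) * y (Sum.inl (Sum.inl i)))
        = ∑ i, kw i / (kv i * m i) * y (Sum.inl (Sum.inl i)) ^ 2 :=
      Finset.sum_congr rfl fun i _ => by ring
    have h2 : (∑ i, Vnom / e i * y (Sum.inl (Sum.inr i)) * y (Sum.inl (Sum.inr i)))
        = ∑ i, Vnom / e i * y (Sum.inl (Sum.inr i)) ^ 2 :=
      Finset.sum_congr rfl fun i _ => by ring
    rw [h1, h2]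
  -- p0 positive definite
  have hp0pos : ∀ y : Idx n → ℝ, y ≠ 0 → 0 < y ⬝ᵥ ((StabMain.P0 m e kw kv (kphi • LR) S Vnom) *ᵥ y) := by
    intro y hy
    rw [hp0exp y]
    have hQ1 : 0 ≤ ∑ i, kw i / (kv i * m i) * y (Sum.inl (Sum.inl i)) ^ 2 :=
      Finset.sum_nonneg fun i _ =>
        mul_nonneg (div_nonneg (hkw i).le (mul_nonneg (hkv i).le (hm i).le)) (sq_nonneg _)
    have hQ2 : 0 ≤ ∑ i, Vnom / e i * y (Sum.inl (Sum.inr i)) ^ 2 :=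
      Finset.sum_nonneg fun i _ => mul_nonneg (div_nonneg hVnom.le (he i).le) (sq_nonneg _)
    have hQ3 : 0 ≤ (fun i => y (Sum.inr (Sum.inl i))) ⬝ᵥ (fun i => y (Sum.inr (Sum.inl i))) := by
      have h0 : (fun i => y (Sum.inr (Sum.inl i))) ⬝ᵥ (fun i => y (Sum.inr (Sum.inl i)))
          = ∑ i, y (Sum.inr (Sum.inl i)) * y (Sum.inr (Sum.inl i)) := rfl
      rw [h0]
      exact Finset.sum_nonneg fun i _ => mul_self_nonneg _
    have hQ4 : 0 ≤ kphi * ((S *ᵥ fun j => y (Sum.inr (Sum.inr j))) ⬝ᵥ (LR *ᵥ (S *ᵥ fun j => y (Sum.inr (Sum.inr j))))) :=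
      mul_nonneg hkphi.le (StabAux.psd_form_nonneg hLRpsd _)
    by_contra hcon
    push_neg at hcon
    have hz1 : (∑ i, kw i / (kv i * m i) * y (Sum.inl (Sum.inl i)) ^ 2) = 0 := by linarith
    have hz2 : (∑ i, Vnom / e i * y (Sum.inl (Sum.inr i)) ^ 2) = 0 := by linarith
    have hz3 : (fun i => y (Sum.inr (Sum.inl i))) ⬝ᵥ (fun i => y (Sum.inr (Sum.inl i))) = 0 := by
      linarith
    have hz4 : kphi * ((S *ᵥ fun j => y (Sum.inr (Sum.inr j))) ⬝ᵥ (LR *ᵥ (S *ᵥ fun j => y (Sum.inr (Sum.inr j))))) = 0 := by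
      linarith
    have hw : ∀ i, y (Sum.inl (Sum.inl i)) = 0 := by
      intro i
      have hterm := (Finset.sum_eq_zero_iff_of_nonneg (fun i _ =>
        mul_nonneg (div_nonneg (hkw i).le (mul_nonneg (hkv i).le (hm i).le)) (sq_nonneg _))).1
        hz1 i (Finset.mem_univ i)
      have hco : 0 < kw i / (kv i * m i) := div_pos (hkw i) (mul_pos (hkv i) (hm i))
      rcases mul_eq_zero.1 hterm with h | h
      · exact absurd h (ne_of_gt hco)
      · exact pow_eq_zero_iff two_ne_zero |>.1 h
    have hv : ∀ i, y (Sum.inl (Sum.inr i)) = 0 := by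
      intro i
      have hterm := (Finset.sum_eq_zero_iff_of_nonneg (fun i _ =>
        mul_nonneg (div_nonneg hVnom.le (he i).le) (sq_nonneg _))).1 hz2 i (Finset.mem_univ i)
      have hco : 0 < Vnom / e i := div_pos hVnom (he i)
      rcases mul_eq_zero.1 hterm with h | h
      · exact absurd h (ne_of_gt hco)
      · exact pow_eq_zero_iff two_ne_zero |>.1 h
    have hη : ∀ i, y (Sum.inr (Sum.inl i)) = 0 := by
      intro i
      have h0 : (fun i => y (Sum.inr (Sum.inl i))) ⬝ᵥ (fun i => y (Sum.inr (Sum.inl i)))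
          = ∑ i, y (Sum.inr (Sum.inl i)) * y (Sum.inr (Sum.inl i)) := rfl
      rw [h0] at hz3
      have hterm := (Finset.sum_eq_zero_iff_of_nonneg (fun i _ => mul_self_nonneg _)).1 hz3 i
        (Finset.mem_univ i)
      exact mul_self_eq_zero.1 hterm
    have hSP0 : ((S *ᵥ fun j => y (Sum.inr (Sum.inr j))) ⬝ᵥ (LR *ᵥ (S *ᵥ fun j => y (Sum.inr (Sum.inr j))))) = 0 := by
      rcases mul_eq_zero.1 hz4 with h | h
      · exact absurd h (ne_of_gt hkphi)
      · exact h
    have hf := hpsizero _ hSP0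
    apply hy
    funext idx
    rcases idx with (i | i) | (i | j)
    · exact hw i
    · exact hv i
    · exact hη i
    · exact congrFun hf j
    -- kernel condition
  have hker : ∀ y : Idx n → ℝ, y ≠ 0 →
      (A *ᵥ y) ⬝ᵥ ((StabMain.P0 m e kw kv (kphi • LR) S Vnom) *ᵥ y) + y ⬝ᵥ ((StabMain.P0 m e kw kv (kphi • LR) S Vnom) *ᵥ (A *ᵥ y)) = 0 →
      (A *ᵥ y) ⬝ᵥ ((StabMain.Pc n) *ᵥ y) + y ⬝ᵥ ((StabMain.Pc n) *ᵥ (A *ᵥ y)) < 0 := by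
    intro y hy hq
    rw [hq2 y, key y] at hq
    have h1 := hAid y
    have h2 := hstep y
    have hQAn : 0 ≤ (∑ i, kw i * kd i / kv i * y (Sum.inl (Sum.inl i)) ^ 2) :=
      Finset.sum_nonneg fun i _ =>
        mul_nonneg (div_nonneg (mul_nonneg (hkw i).le (hkd i).le) (hkv i).le) (sq_nonneg _)
    have hQBn : 0 ≤ (∑ i, (kw i * y (Sum.inl (Sum.inl i)) - kv i * y (Sum.inl (Sum.inr i))) ^ 2 / kv i) :=
      Finset.sum_nonneg fun i _ => div_nonneg (sq_nonneg _) (hkv i).le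
    have hSEn : 0 ≤ ((fun i => y (Sum.inr (Sum.inl i))) ⬝ᵥ (Leta *ᵥ (fun i => y (Sum.inr (Sum.inl i))))) := StabAux.psd_form_nonneg hLetapsd _
    have hQA0 : (∑ i, kw i * kd i / kv i * y (Sum.inl (Sum.inl i)) ^ 2) = 0 := by linarith
    have hQB0 : (∑ i, (kw i * y (Sum.inl (Sum.inl i)) - kv i * y (Sum.inl (Sum.inr i))) ^ 2 / kv i) = 0 := by linarith
    have hstep0 : Vnom * ((fun i => y (Sum.inl (Sum.inr i))) ⬝ᵥ (LR *ᵥ (fun i => y (Sum.inl (Sum.inr i))))) - kphi * ((fun i => y (Sum.inl (Sum.inr i))) ⬝ᵥ (LR *ᵥ (S *ᵥ fun j => y (Sum.inr (Sum.inr j))))) + γ * (kphi * ((S *ᵥ fun j => y (Sum.inr (Sum.inr j))) ⬝ᵥ (LR *ᵥ (S *ᵥ fun j => y (Sum.inr (Sum.inr j)))))) = 0 := by linarith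
    have hw : ∀ i, y (Sum.inl (Sum.inl i)) = 0 := by
      intro i
      have hterm := (Finset.sum_eq_zero_iff_of_nonneg (fun i _ =>
        mul_nonneg (div_nonneg (mul_nonneg (hkw i).le (hkd i).le) (hkv i).le) (sq_nonneg _))).1
        hQA0 i (Finset.mem_univ i)
      have hco : 0 < kw i * kd i / kv i := div_pos (mul_pos (hkw i) (hkd i)) (hkv i)
      rcases mul_eq_zero.1 hterm with h | h
      · exact absurd h (ne_of_gt hco)
      · exact pow_eq_zero_iff two_ne_zero |>.1 h
    have hv : ∀ i, y (Sum.inl (Sum.inr i)) = 0 := by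
      intro i
      have hterm := (Finset.sum_eq_zero_iff_of_nonneg (fun i _ =>
        div_nonneg (sq_nonneg _) (hkv i).le)).1 hQB0 i (Finset.mem_univ i)
      have hnum : (kw i * y (Sum.inl (Sum.inl i)) - kv i * y (Sum.inl (Sum.inr i))) ^ 2 = 0 := by
        rcases div_eq_zero_iff.1 hterm with h | h
        · exact h
        · exact absurd h (hkv0 i)
      have hlin := pow_eq_zero_iff two_ne_zero |>.1 hnum
      rw [hw i] at hlin
      have := hkv0 i
      have : kv i * y (Sum.inl (Sum.inr i)) = 0 := by linarith
      rcases mul_eq_zero.1 this with h | h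
      · exact absurd h (hkv0 i)
      · exact h
    have hvf : (fun i => y (Sum.inl (Sum.inr i))) = (0 : Fin n → ℝ) := funext fun i => hv i
    have hSV0 : ((fun i => y (Sum.inl (Sum.inr i))) ⬝ᵥ (LR *ᵥ (fun i => y (Sum.inl (Sum.inr i))))) = 0 := by rw [hvf, zero_dotProduct]
    have hSX0 : ((fun i => y (Sum.inl (Sum.inr i))) ⬝ᵥ (LR *ᵥ (S *ᵥ fun j => y (Sum.inr (Sum.inr j))))) = 0 := by rw [hvf, zero_dotProduct]
    have hSP0 : ((S *ᵥ fun j => y (Sum.inr (Sum.inr j))) ⬝ᵥ (LR *ᵥ (S *ᵥ fun j => y (Sum.inr (Sum.inr j))))) = 0 := by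
      rw [hSV0, hSX0] at hstep0
      have hγk : 0 < γ * kphi := mul_pos hγ hkphi
      nlinarith [hstep0]
    have hff := hpsizero _ hSP0
    have hffi : ∀ j, y (Sum.inr (Sum.inr j)) = 0 := fun j => by
      have := congrFun hff j; simpa using this
    have hηne : ∃ i, y (Sum.inr (Sum.inl i)) ≠ 0 := by
      by_contra hno
      push_neg at hno
      apply hy
      funext idx
      rcases idx with (i | i) | (i | j)
      · exact hw i
      · exact hv i
      · exact hno i
      · exact hffi j
    rw [StabMain.Pc_quad, StabMain.Pc_quad, hAv y]
    have hz0 : (fun _ : Fin (n-1) => (0:ℝ)) = 0 := rfl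
    have hz1 : (fun _ : Fin n => (0:ℝ)) = 0 := rfl
    simp only [StabMain.wp_def, StabMain.vp_def, StabMain.ep_def, StabMain.fp_def,
      Sum.elim_inl, Sum.elim_inr, hw, hv, hffi, hz0, hz1, Matrix.mulVec_zero,
      Pi.zero_apply, mul_zero, zero_mul, sub_zero, zero_sub, add_zero, zero_add, neg_zero,
      dotProduct_zero, zero_dotProduct]
    have hb1 : ((fun i => -(m i * (kv i * ((kw i)⁻¹ * (kdi i * y (Sum.inr (Sum.inl i)))))))
          ⬝ᵥ (fun i => y (Sum.inr (Sum.inl i))))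
        = -(∑ i, m i * (kv i * ((kw i)⁻¹ * (kdi i
            * (y (Sum.inr (Sum.inl i)) * y (Sum.inr (Sum.inl i))))))) := by
      have h0 : ((fun i => -(m i * (kv i * ((kw i)⁻¹ * (kdi i * y (Sum.inr (Sum.inl i)))))))
            ⬝ᵥ (fun i => y (Sum.inr (Sum.inl i))))
          = ∑ i, -(m i * (kv i * ((kw i)⁻¹ * (kdi i * y (Sum.inr (Sum.inl i))))))
              * y (Sum.inr (Sum.inl i)) := rfl
      rw [h0, ← Finset.sum_neg_distrib]
      exact Finset.sum_congr rfl fun i _ => by ring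
    have hb2 : ((fun i => y (Sum.inr (Sum.inl i)))
          ⬝ᵥ (fun i => -(m i * (kv i * ((kw i)⁻¹ * (kdi i * y (Sum.inr (Sum.inl i))))))))
        = -(∑ i, m i * (kv i * ((kw i)⁻¹ * (kdi i
            * (y (Sum.inr (Sum.inl i)) * y (Sum.inr (Sum.inl i))))))) := by
      have h0 : ((fun i => y (Sum.inr (Sum.inl i)))
            ⬝ᵥ (fun i => -(m i * (kv i * ((kw i)⁻¹ * (kdi i * y (Sum.inr (Sum.inl i))))))))
          = ∑ i, y (Sum.inr (Sum.inl i))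
              * -(m i * (kv i * ((kw i)⁻¹ * (kdi i * y (Sum.inr (Sum.inl i)))))) := rfl
      rw [h0, ← Finset.sum_neg_distrib]
      exact Finset.sum_congr rfl fun i _ => by ring
    have hpos : 0 < ∑ i, m i * (kv i * ((kw i)⁻¹ * (kdi i
        * (y (Sum.inr (Sum.inl i)) * y (Sum.inr (Sum.inl i)))))) := by
      obtain ⟨i0, hi0⟩ := hηne
      refine Finset.sum_pos' (fun i _ => ?_) ⟨i0, Finset.mem_univ i0, ?_⟩
      · exact mul_nonneg (hm i).le (mul_nonneg (hkv i).le (mul_nonneg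
          (inv_nonneg.2 (hkw i).le) (mul_nonneg (hkdi i).le (mul_self_nonneg _))))
      · exact mul_pos (hm i0) (mul_pos (hkv i0) (mul_pos (inv_pos.2 (hkw i0))
          (mul_pos (hkdi i0) (mul_self_pos.2 hi0))))
    linarith [hb1, hb2, hpos]
    -- continuity of the four forms
  have hcont1 : Continuous fun y : Idx n → ℝ => y ⬝ᵥ ((StabMain.P0 m e kw kv (kphi • LR) S Vnom) *ᵥ y) := by
    have h := StabAux.continuous_matQuad (1 : Matrix (Idx n) (Idx n) ℝ) (StabMain.P0 m e kw kv (kphi • LR) S Vnom)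
    simpa [Matrix.one_mulVec] using h
  have hcont2 : Continuous fun y : Idx n → ℝ => y ⬝ᵥ ((StabMain.Pc n) *ᵥ y) := by
    have h := StabAux.continuous_matQuad (1 : Matrix (Idx n) (Idx n) ℝ) (StabMain.Pc n)
    simpa [Matrix.one_mulVec] using h
  have hcont3 : Continuous fun y : Idx n → ℝ =>
      (A *ᵥ y) ⬝ᵥ ((StabMain.P0 m e kw kv (kphi • LR) S Vnom) *ᵥ y) + y ⬝ᵥ ((StabMain.P0 m e kw kv (kphi • LR) S Vnom) *ᵥ (A *ᵥ y)) := by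
    have h1 := StabAux.continuous_matQuad A (StabMain.P0 m e kw kv (kphi • LR) S Vnom)
    have h2 := StabAux.continuous_matQuad (1 : Matrix (Idx n) (Idx n) ℝ) ((StabMain.P0 m e kw kv (kphi • LR) S Vnom) * A)
    have e2 : (fun y : Idx n → ℝ => ((1 : Matrix (Idx n) (Idx n) ℝ) *ᵥ y) ⬝ᵥ (((StabMain.P0 m e kw kv (kphi • LR) S Vnom) * A) *ᵥ y))
        = fun y : Idx n → ℝ => y ⬝ᵥ ((StabMain.P0 m e kw kv (kphi • LR) S Vnom) *ᵥ (A *ᵥ y)) := by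
      funext y; rw [Matrix.one_mulVec, ← Matrix.mulVec_mulVec]
    exact h1.add (e2 ▸ h2)
  have hcont4 : Continuous fun y : Idx n → ℝ =>
      (A *ᵥ y) ⬝ᵥ ((StabMain.Pc n) *ᵥ y) + y ⬝ᵥ ((StabMain.Pc n) *ᵥ (A *ᵥ y)) := by
    have h1 := StabAux.continuous_matQuad A (StabMain.Pc n)
    have h2 := StabAux.continuous_matQuad (1 : Matrix (Idx n) (Idx n) ℝ) ((StabMain.Pc n) * A)
    have e2 : (fun y : Idx n → ℝ => ((1 : Matrix (Idx n) (Idx n) ℝ) *ᵥ y) ⬝ᵥ (((StabMain.Pc n) * A) *ᵥ y))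
        = fun y : Idx n → ℝ => y ⬝ᵥ ((StabMain.Pc n) *ᵥ (A *ᵥ y)) := by
      funext y; rw [Matrix.one_mulVec, ← Matrix.mulVec_mulVec]
    exact h1.add (e2 ▸ h2)
  -- homogeneity of the four forms
  have hom1 : ∀ (c : ℝ) (y : Idx n → ℝ), (c • y) ⬝ᵥ ((StabMain.P0 m e kw kv (kphi • LR) S Vnom) *ᵥ (c • y))
      = c^2 * (y ⬝ᵥ ((StabMain.P0 m e kw kv (kphi • LR) S Vnom) *ᵥ y)) := by
    intro c y
    rw [Matrix.mulVec_smul, dotProduct_smul, smul_dotProduct]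
    simp [smul_eq_mul]; ring
  have hom2 : ∀ (c : ℝ) (y : Idx n → ℝ), (c • y) ⬝ᵥ ((StabMain.Pc n) *ᵥ (c • y))
      = c^2 * (y ⬝ᵥ ((StabMain.Pc n) *ᵥ y)) := by
    intro c y
    rw [Matrix.mulVec_smul, dotProduct_smul, smul_dotProduct]
    simp [smul_eq_mul]; ring
  have hom3 : ∀ (c : ℝ) (y : Idx n → ℝ),
      (A *ᵥ (c • y)) ⬝ᵥ ((StabMain.P0 m e kw kv (kphi • LR) S Vnom) *ᵥ (c • y)) + (c • y) ⬝ᵥ ((StabMain.P0 m e kw kv (kphi • LR) S Vnom) *ᵥ (A *ᵥ (c • y)))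
      = c^2 * ((A *ᵥ y) ⬝ᵥ ((StabMain.P0 m e kw kv (kphi • LR) S Vnom) *ᵥ y) + y ⬝ᵥ ((StabMain.P0 m e kw kv (kphi • LR) S Vnom) *ᵥ (A *ᵥ y))) := by
    intro c y
    rw [Matrix.mulVec_smul A, Matrix.mulVec_smul, Matrix.mulVec_smul,
      dotProduct_smul, dotProduct_smul, smul_dotProduct,
      smul_dotProduct]
    simp [smul_eq_mul]; ring
  have hom4 : ∀ (c : ℝ) (y : Idx n → ℝ),
      (A *ᵥ (c • y)) ⬝ᵥ ((StabMain.Pc n) *ᵥ (c • y)) + (c • y) ⬝ᵥ ((StabMain.Pc n) *ᵥ (A *ᵥ (c • y)))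
      = c^2 * ((A *ᵥ y) ⬝ᵥ ((StabMain.Pc n) *ᵥ y) + y ⬝ᵥ ((StabMain.Pc n) *ᵥ (A *ᵥ y))) := by
    intro c y
    rw [Matrix.mulVec_smul A, Matrix.mulVec_smul, Matrix.mulVec_smul,
      dotProduct_smul, dotProduct_smul, smul_dotProduct,
      smul_dotProduct]
    simp [smul_eq_mul]; ring
  -- apply the master lemma
  obtain ⟨ε, hεpos, cl, hclpos, Cu, hCupos, δ, hδpos, hall⟩ :=
    StabAux.master (ι := Idx n)
      (fun y => y ⬝ᵥ ((StabMain.P0 m e kw kv (kphi • LR) S Vnom) *ᵥ y))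
      (fun y => y ⬝ᵥ ((StabMain.Pc n) *ᵥ y))
      (fun y => (A *ᵥ y) ⬝ᵥ ((StabMain.P0 m e kw kv (kphi • LR) S Vnom) *ᵥ y) + y ⬝ᵥ ((StabMain.P0 m e kw kv (kphi • LR) S Vnom) *ᵥ (A *ᵥ y)))
      (fun y => (A *ᵥ y) ⬝ᵥ ((StabMain.Pc n) *ᵥ y) + y ⬝ᵥ ((StabMain.Pc n) *ᵥ (A *ᵥ y)))
      hcont1 hcont2 hcont3 hcont4 hom1 hom2 hom3 hom4 hp0pos hq0neg hker
  -- the Lyapunov function along the solution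
  have hκpos : 0 < δ / Cu := div_pos hδpos hCupos
  have hPform : ∀ y : Idx n → ℝ, y ⬝ᵥ (((StabMain.P0 m e kw kv (kphi • LR) S Vnom) + ε • (StabMain.Pc n)) *ᵥ y)
      = y ⬝ᵥ ((StabMain.P0 m e kw kv (kphi • LR) S Vnom) *ᵥ y) + ε * (y ⬝ᵥ ((StabMain.Pc n) *ᵥ y)) := by
    intro y
    rw [Matrix.add_mulVec, Matrix.smul_mulVec, dotProduct_add,
      dotProduct_smul]
    simp [smul_eq_mul]
  have hGform : ∀ y : Idx n → ℝ,
      (A *ᵥ y) ⬝ᵥ (((StabMain.P0 m e kw kv (kphi • LR) S Vnom) + ε • (StabMain.Pc n)) *ᵥ y) + y ⬝ᵥ (((StabMain.P0 m e kw kv (kphi • LR) S Vnom) + ε • (StabMain.Pc n)) *ᵥ (A *ᵥ y))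
      = ((A *ᵥ y) ⬝ᵥ ((StabMain.P0 m e kw kv (kphi • LR) S Vnom) *ᵥ y) + y ⬝ᵥ ((StabMain.P0 m e kw kv (kphi • LR) S Vnom) *ᵥ (A *ᵥ y)))
        + ε * ((A *ᵥ y) ⬝ᵥ ((StabMain.Pc n) *ᵥ y) + y ⬝ᵥ ((StabMain.Pc n) *ᵥ (A *ᵥ y))) := by
    intro y
    rw [Matrix.add_mulVec, Matrix.smul_mulVec, Matrix.add_mulVec,
      Matrix.smul_mulVec, dotProduct_add, dotProduct_add,
      dotProduct_smul, dotProduct_smul]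
    simp [smul_eq_mul]; ring
  have hVlow : ∀ t : ℝ, cl * ‖x t‖^2 ≤ x t ⬝ᵥ (((StabMain.P0 m e kw kv (kphi • LR) S Vnom) + ε • (StabMain.Pc n)) *ᵥ x t) := by
    intro t; rw [hPform]; exact (hall (x t)).1
  have hVup : ∀ t : ℝ, x t ⬝ᵥ (((StabMain.P0 m e kw kv (kphi • LR) S Vnom) + ε • (StabMain.Pc n)) *ᵥ x t) ≤ Cu * ‖x t‖^2 := by
    intro t; rw [hPform]; exact (hall (x t)).2.1
  have hVd : ∀ t : ℝ, HasDerivAt (fun s => x s ⬝ᵥ (((StabMain.P0 m e kw kv (kphi • LR) S Vnom) + ε • (StabMain.Pc n)) *ᵥ x s))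
      ((A *ᵥ x t) ⬝ᵥ (((StabMain.P0 m e kw kv (kphi • LR) S Vnom) + ε • (StabMain.Pc n)) *ᵥ x t) + x t ⬝ᵥ (((StabMain.P0 m e kw kv (kphi • LR) S Vnom) + ε • (StabMain.Pc n)) *ᵥ (A *ᵥ x t))) t :=
    fun t => StabAux.hasDerivAt_quadForm _ x _ t (hx t)
  have hDneg : ∀ t : ℝ, (A *ᵥ x t) ⬝ᵥ (((StabMain.P0 m e kw kv (kphi • LR) S Vnom) + ε • (StabMain.Pc n)) *ᵥ x t) + x t ⬝ᵥ (((StabMain.P0 m e kw kv (kphi • LR) S Vnom) + ε • (StabMain.Pc n)) *ᵥ (A *ᵥ x t))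
      ≤ -(δ / Cu) * (x t ⬝ᵥ (((StabMain.P0 m e kw kv (kphi • LR) S Vnom) + ε • (StabMain.Pc n)) *ᵥ x t)) := by
    intro t
    have h1 : (A *ᵥ x t) ⬝ᵥ (((StabMain.P0 m e kw kv (kphi • LR) S Vnom) + ε • (StabMain.Pc n)) *ᵥ x t) + x t ⬝ᵥ (((StabMain.P0 m e kw kv (kphi • LR) S Vnom) + ε • (StabMain.Pc n)) *ᵥ (A *ᵥ x t))
        ≤ -δ * ‖x t‖^2 := by
      rw [hGform]
      exact (hall (x t)).2.2
    have h2 := hVup t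
    have h3 : (δ / Cu) * (x t ⬝ᵥ (((StabMain.P0 m e kw kv (kphi • LR) S Vnom) + ε • (StabMain.Pc n)) *ᵥ x t)) ≤ (δ / Cu) * (Cu * ‖x t‖^2) :=
      mul_le_mul_of_nonneg_left h2 hκpos.le
    have h4 : (δ / Cu) * (Cu * ‖x t‖^2) = δ * ‖x t‖^2 := by
      field_simp
    linarith
  -- exponential decay
  have hM : ∀ t : ℝ, 0 ≤ t → x t ⬝ᵥ (((StabMain.P0 m e kw kv (kphi • LR) S Vnom) + ε • (StabMain.Pc n)) *ᵥ x t)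
      ≤ (x 0 ⬝ᵥ (((StabMain.P0 m e kw kv (kphi • LR) S Vnom) + ε • (StabMain.Pc n)) *ᵥ x 0)) * Real.exp (-((δ / Cu) * t)) := by
    have hg : ∀ t : ℝ, HasDerivAt
        (fun s => (x s ⬝ᵥ (((StabMain.P0 m e kw kv (kphi • LR) S Vnom) + ε • (StabMain.Pc n)) *ᵥ x s)) * Real.exp ((δ / Cu) * s))
        (((A *ᵥ x t) ⬝ᵥ (((StabMain.P0 m e kw kv (kphi • LR) S Vnom) + ε • (StabMain.Pc n)) *ᵥ x t) + x t ⬝ᵥ (((StabMain.P0 m e kw kv (kphi • LR) S Vnom) + ε • (StabMain.Pc n)) *ᵥ (A *ᵥ x t)))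
            * Real.exp ((δ / Cu) * t)
          + (x t ⬝ᵥ (((StabMain.P0 m e kw kv (kphi • LR) S Vnom) + ε • (StabMain.Pc n)) *ᵥ x t)) * (Real.exp ((δ / Cu) * t) * (δ / Cu))) t := by
      intro t
      have h2 : HasDerivAt (fun s : ℝ => Real.exp ((δ / Cu) * s))
          (Real.exp ((δ / Cu) * t) * (δ / Cu)) t := by
        have h3 : HasDerivAt (fun s : ℝ => (δ / Cu) * s) (δ / Cu) t := by
          simpa using (hasDerivAt_id t).const_mul (δ / Cu)
        exact h3.exp
      exact (hVd t).mul h2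
    have hanti : Antitone (fun s => (x s ⬝ᵥ (((StabMain.P0 m e kw kv (kphi • LR) S Vnom) + ε • (StabMain.Pc n)) *ᵥ x s)) * Real.exp ((δ / Cu) * s)) := by
      apply antitone_of_deriv_nonpos
      · intro s
        exact (hg s).differentiableAt
      · intro s
        rw [(hg s).deriv]
        have h1 := hDneg s
        have h2 : (0:ℝ) < Real.exp ((δ / Cu) * s) := Real.exp_pos _
        have h3 : (A *ᵥ x s) ⬝ᵥ (((StabMain.P0 m e kw kv (kphi • LR) S Vnom) + ε • (StabMain.Pc n)) *ᵥ x s) + x s ⬝ᵥ (((StabMain.P0 m e kw kv (kphi • LR) S Vnom) + ε • (StabMain.Pc n)) *ᵥ (A *ᵥ x s))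
            + (δ / Cu) * (x s ⬝ᵥ (((StabMain.P0 m e kw kv (kphi • LR) S Vnom) + ε • (StabMain.Pc n)) *ᵥ x s)) ≤ 0 := by linarith
        nlinarith [mul_le_mul_of_nonneg_right h3 h2.le]
    intro t ht
    have h5 : (x t ⬝ᵥ (((StabMain.P0 m e kw kv (kphi • LR) S Vnom) + ε • (StabMain.Pc n)) *ᵥ x t)) * Real.exp ((δ / Cu) * t)
        ≤ (x 0 ⬝ᵥ (((StabMain.P0 m e kw kv (kphi • LR) S Vnom) + ε • (StabMain.Pc n)) *ᵥ x 0)) * Real.exp ((δ / Cu) * 0) := hanti ht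
    have h6 : Real.exp ((δ / Cu) * 0) = 1 := by simp
    rw [h6, mul_one] at h5
    calc x t ⬝ᵥ (((StabMain.P0 m e kw kv (kphi • LR) S Vnom) + ε • (StabMain.Pc n)) *ᵥ x t)
        = (x t ⬝ᵥ (((StabMain.P0 m e kw kv (kphi • LR) S Vnom) + ε • (StabMain.Pc n)) *ᵥ x t)) * Real.exp ((δ / Cu) * t) * Real.exp (-((δ / Cu) * t)) := by
          rw [mul_assoc, ← Real.exp_add, add_neg_cancel, Real.exp_zero, mul_one]
      _ ≤ (x 0 ⬝ᵥ (((StabMain.P0 m e kw kv (kphi • LR) S Vnom) + ε • (StabMain.Pc n)) *ᵥ x 0)) * Real.exp (-((δ / Cu) * t)) :=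
          mul_le_mul_of_nonneg_right h5 (Real.exp_nonneg _)
  -- conclude
  rw [tendsto_zero_iff_norm_tendsto_zero]
  have hbound : ∀ t : ℝ, 0 ≤ t → ‖x t‖
      ≤ Real.sqrt ((x 0 ⬝ᵥ (((StabMain.P0 m e kw kv (kphi • LR) S Vnom) + ε • (StabMain.Pc n)) *ᵥ x 0)) / cl * Real.exp (-((δ / Cu) * t))) := by
    intro t ht
    have h1 := hVlow t
    have h2 := hM t ht
    have h3 : ‖x t‖^2 ≤ (x 0 ⬝ᵥ (((StabMain.P0 m e kw kv (kphi • LR) S Vnom) + ε • (StabMain.Pc n)) *ᵥ x 0)) / cl * Real.exp (-((δ / Cu) * t)) := by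
      rw [div_mul_eq_mul_div, le_div_iff₀ hclpos]
      nlinarith [h1, h2]
    calc ‖x t‖ = Real.sqrt (‖x t‖^2) := by rw [Real.sqrt_sq (norm_nonneg _)]
      _ ≤ _ := Real.sqrt_le_sqrt h3
  have hexp0 : Tendsto (fun t : ℝ => (x 0 ⬝ᵥ (((StabMain.P0 m e kw kv (kphi • LR) S Vnom) + ε • (StabMain.Pc n)) *ᵥ x 0)) / cl * Real.exp (-((δ / Cu) * t)))
      atTop (nhds 0) := by
    have h1 : Tendsto (fun t : ℝ => (δ / Cu) * t) atTop atTop :=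
      Tendsto.const_mul_atTop hκpos tendsto_id
    have h2 : Tendsto (fun t : ℝ => -((δ / Cu) * t)) atTop atBot :=
      tendsto_neg_atTop_atBot.comp h1
    have h3 : Tendsto (fun t : ℝ => Real.exp (-((δ / Cu) * t))) atTop (nhds 0) :=
      Real.tendsto_exp_atBot.comp h2
    have h4 := h3.const_mul ((x 0 ⬝ᵥ (((StabMain.P0 m e kw kv (kphi • LR) S Vnom) + ε • (StabMain.Pc n)) *ᵥ x 0)) / cl)
    simpa using h4
  have hsq : Tendsto (fun t : ℝ =>
      Real.sqrt ((x 0 ⬝ᵥ (((StabMain.P0 m e kw kv (kphi • LR) S Vnom) + ε • (StabMain.Pc n)) *ᵥ x 0)) / cl * Real.exp (-((δ / Cu) * t)))) atTop (nhds 0) := by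
    have h := (Real.continuous_sqrt.tendsto 0).comp hexp0
    simpa [Real.sqrt_zero, Function.comp_def] using h
  exact squeeze_zero' (Filter.Eventually.of_forall fun t => norm_nonneg _)
    (Filter.eventually_atTop.2 ⟨0, fun t ht => hbound t ht⟩) hsq
end

section
/- Under Assumptions 1 and 2, the closed-loop system matrix A is Hurwitz: every eigenvalue μ ∈ ℂ of A (i.e., every element of the spectrum of A regarded as a complex matrix) satisfies Re(μ) < 0. -/
set_option linter.unusedSectionVars false
set_option maxHeartbeats 1000000

open Matrix Filter

namespace HurwitzAux

variable {ι κ : Type*} [Fintype ι] [Fintype κ] [DecidableEq ι] [DecidableEq κ]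

/-- real part of hermitian dot product as a sum -/
lemma redot_eq (x y : ι → ℂ) :
    (star x ⬝ᵥ y).re = ∑ i, ((x i).re * (y i).re + (x i).im * (y i).im) := by
  rw [dotProduct, Complex.re_sum]
  refine Finset.sum_congr rfl fun i _ => ?_
  simp [Complex.mul_re]

lemma redot_comm (x y : ι → ℂ) : (star x ⬝ᵥ y).re = (star y ⬝ᵥ x).re := by
  rw [redot_eq, redot_eq]
  exact Finset.sum_congr rfl fun i _ => by ring

lemma redot_self_nonneg (x : ι → ℂ) : 0 ≤ (star x ⬝ᵥ x).re := by
  rw [redot_eq]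
  exact Finset.sum_nonneg fun i _ => add_nonneg (mul_self_nonneg _) (mul_self_nonneg _)

lemma redot_self_eq_zero {x : ι → ℂ} (h : (star x ⬝ᵥ x).re = 0) : x = 0 := by
  rw [redot_eq] at h
  have h2 := (Finset.sum_eq_zero_iff_of_nonneg
    (fun i _ => add_nonneg (mul_self_nonneg ((x i).re)) (mul_self_nonneg ((x i).im)))).1 h
  funext i
  have hi := h2 i (Finset.mem_univ i)
  have h1 : (x i).re = 0 := by nlinarith [mul_self_nonneg ((x i).re), mul_self_nonneg ((x i).im)]
  have h3 : (x i).im = 0 := by nlinarith [mul_self_nonneg ((x i).re), mul_self_nonneg ((x i).im)]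
  show x i = 0
  exact Complex.ext h1 h3

lemma dot_self_im (x : ι → ℂ) : (star x ⬝ᵥ x).im = 0 := by
  rw [dotProduct, Complex.im_sum]
  refine Finset.sum_eq_zero fun i _ => ?_
  simp [Complex.mul_im]
  ring

lemma quad_ineq (x y : ι → ℂ) (s t : ℝ) :
    2*(s*t) * (star x ⬝ᵥ y).re ≤ s^2*(star x ⬝ᵥ x).re + t^2*(star y ⬝ᵥ y).re := by
  rw [redot_eq, redot_eq, redot_eq, Finset.mul_sum, Finset.mul_sum, Finset.mul_sum,
    ← Finset.sum_add_distrib]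
  refine Finset.sum_le_sum fun i _ => ?_
  nlinarith [sq_nonneg (s*(x i).re - t*(y i).re), sq_nonneg (s*(x i).im - t*(y i).im)]

lemma mmap_mul (X : Matrix ι κ ℝ) {κ' : Type*} [Fintype κ'] (Y : Matrix κ κ' ℝ) :
    (X * Y).map (Complex.ofReal ·) =
      X.map (Complex.ofReal ·) * Y.map (Complex.ofReal ·) := by
  ext i j
  simp [Matrix.mul_apply, Matrix.map_apply]

lemma mmap_neg (X : Matrix ι κ ℝ) :
    (-X).map (Complex.ofReal ·) = -(X.map (Complex.ofReal ·)) := by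
  ext i j; simp [Matrix.map_apply]

lemma mmap_add (X Y : Matrix ι κ ℝ) :
    (X + Y).map (Complex.ofReal ·) = X.map (Complex.ofReal ·) + Y.map (Complex.ofReal ·) := by
  ext i j; simp [Matrix.map_apply]

lemma mmap_smul (r : ℝ) (X : Matrix ι κ ℝ) :
    ((r • X).map (Complex.ofReal ·)) = (r : ℂ) • (X.map (Complex.ofReal ·)) := by
  ext i j; simp [Matrix.map_apply]

lemma mmap_diagonal (f : ι → ℝ) :
    (Matrix.diagonal f).map (Complex.ofReal ·) = Matrix.diagonal (fun i => (f i : ℂ)) := by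
  rw [Matrix.diagonal_map (by simp)]

lemma mmap_one : (1 : Matrix ι ι ℝ).map (Complex.ofReal ·) = 1 := by
  ext i j
  by_cases h : i = j <;> simp [Matrix.one_apply, h]

lemma mmap_zero : (0 : Matrix ι κ ℝ).map (Complex.ofReal ·) = 0 := by
  ext i j; simp

open scoped MatrixOrder in
lemma exists_sym_sqrt (X : Matrix ι ι ℝ) (hX : X.PosSemidef) :
    ∃ B0 : Matrix ι ι ℝ, B0ᵀ = B0 ∧ B0 * B0 = X := by
  obtain ⟨B, hB, -, hBB⟩ :=
    CFC.exists_sqrt_of_isSelfAdjoint_of_quasispectrumRestricts hX.isHermitian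
      (QuasispectrumRestricts.nnreal_of_nonneg hX.nonneg)
  refine ⟨B, ?_, ?_⟩
  · have := hB.star_eq
    rwa [Matrix.star_eq_conjTranspose, Matrix.conjTranspose_eq_transpose_of_trivial] at this
  · simpa using hBB

/-- Factorization of the complexification of a real PSD matrix. -/
lemma herm_split (X : Matrix ι ι ℝ) (hX : X.PosSemidef) :
    ∃ B : Matrix ι ι ℂ,
      (∀ x y : ι → ℂ, star x ⬝ᵥ (X.map (Complex.ofReal ·) *ᵥ y)
         = star (B *ᵥ x) ⬝ᵥ (B *ᵥ y)) ∧
      (∀ x : ι → ℂ, B *ᵥ (B *ᵥ x) = X.map (Complex.ofReal ·) *ᵥ x) := by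
  classical
  obtain ⟨B0, hsym, hBB⟩ := exists_sym_sqrt X hX
  refine ⟨B0.map (Complex.ofReal ·), ?_, ?_⟩
  · intro x y
    have hX2 : X.map (Complex.ofReal ·) =
        B0.map (Complex.ofReal ·) * B0.map (Complex.ofReal ·) := by
      rw [← mmap_mul, hBB]
    have hH : (B0.map (Complex.ofReal ·))ᴴ = B0.map (Complex.ofReal ·) := by
      ext i j
      simp only [Matrix.conjTranspose_apply, Matrix.map_apply]
      have hji : B0 j i = B0 i j := by conv_lhs => rw [← hsym, Matrix.transpose_apply]
      rw [hji]
      simp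
    rw [hX2, ← Matrix.mulVec_mulVec, Matrix.dotProduct_mulVec (star x),
      show star x ᵥ* B0.map (Complex.ofReal ·) = star (B0.map (Complex.ofReal ·) *ᵥ x) from by
        rw [Matrix.star_mulVec, hH]]
  · intro x
    rw [Matrix.mulVec_mulVec, ← mmap_mul, hBB]

/-- complex kernel of a real matrix whose real kernel is the constants -/
lemma kernel_c (X : Matrix ι ι ℝ)
    (hker : ∀ u : ι → ℝ, X *ᵥ u = 0 → ∃ c : ℝ, u = fun _ => c)
    (x : ι → ℂ) (hx : X.map (Complex.ofReal ·) *ᵥ x = 0) :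
    ∃ z : ℂ, x = fun _ => z := by
  have hre : X *ᵥ (fun j => (x j).re) = 0 := by
    funext i
    have h0 := congrFun hx i
    simp only [Matrix.mulVec, dotProduct, Matrix.map_apply, Pi.zero_apply] at h0 ⊢
    have h1 := congrArg Complex.re h0
    rw [Complex.re_sum] at h1
    simpa [Complex.mul_re] using h1
  have him : X *ᵥ (fun j => (x j).im) = 0 := by
    funext i
    have h0 := congrFun hx i
    simp only [Matrix.mulVec, dotProduct, Matrix.map_apply, Pi.zero_apply] at h0 ⊢
    have h1 := congrArg Complex.im h0
    rw [Complex.im_sum] at h1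
    simpa [Complex.mul_im] using h1
  obtain ⟨cr, hcr⟩ := hker _ hre
  obtain ⟨ci, hci⟩ := hker _ him
  refine ⟨⟨cr, ci⟩, funext fun j => ?_⟩
  have h1 := congrFun hcr j
  have h2 := congrFun hci j
  exact Complex.ext (by simpa using h1) (by simpa using h2)

lemma proj_lemma {n : ℕ} (hn : 2 ≤ n) (LR : Matrix (Fin n) (Fin n) ℝ)
    (h1 : LR *ᵥ (fun _ => (1:ℝ)) = 0)
    (S : Matrix (Fin n) (Fin (n-1)) ℝ) (hS : Sᵀ * S = 1)
    (hS1 : Sᵀ *ᵥ (fun _ => (1:ℝ)) = 0) :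
    LR * (S * Sᵀ) = LR := by
  classical
  have hn0 : (n:ℝ) ≠ 0 := by
    have : 0 < n := by omega
    exact_mod_cast this.ne'
  have hnn : n = (n-1) + 1 := by omega
  set u : Matrix (Fin n) (Fin 1) ℝ := Matrix.of (fun _ _ => (Real.sqrt n)⁻¹) with hu
  have hcol : ∀ j : Fin (n-1), ∑ i, S i j = 0 := by
    intro j
    have := congrFun hS1 j
    simpa [Matrix.mulVec, dotProduct, Matrix.transpose_apply] using this
  have hStu : Sᵀ * u = 0 := by
    ext j k
    simp only [Matrix.mul_apply, Matrix.transpose_apply, hu, Matrix.of_apply,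
      Matrix.zero_apply]
    rw [← Finset.sum_mul, hcol j, zero_mul]
  have hutS : uᵀ * S = 0 := by
    ext k j
    simp only [Matrix.mul_apply, Matrix.transpose_apply, hu, Matrix.of_apply,
      Matrix.zero_apply]
    rw [← Finset.mul_sum, hcol j, mul_zero]
  have hutu : uᵀ * u = 1 := by
    ext j k
    have hsq : (Real.sqrt n)⁻¹ * (Real.sqrt n)⁻¹ = (n:ℝ)⁻¹ := by
      rw [← mul_inv]
      rw [Real.mul_self_sqrt (by positivity)]
    simp only [Matrix.mul_apply, Matrix.transpose_apply, hu, Matrix.of_apply]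
    rw [Finset.sum_const, Finset.card_univ, Fintype.card_fin, hsq]
    have hjk : j = k := Subsingleton.elim j k
    simp [hjk, Matrix.one_apply, nsmul_eq_mul, mul_inv_cancel₀ hn0]
  have hWtW : fromRows Sᵀ uᵀ * fromCols S u = 1 := by
    rw [fromRows_mul_fromCols, hS, hStu, hutS, hutu, Matrix.fromBlocks_one]
  have e : Fin n ≃ Fin (n-1) ⊕ Fin 1 := (finCongr hnn).trans finSumFinEquiv.symm
  have hWWt : fromCols S u * fromRows Sᵀ uᵀ = 1 :=
    (fromCols_mul_fromRows_eq_one_comm e S u Sᵀ uᵀ).mpr hWtW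
  rw [fromCols_mul_fromRows] at hWWt
  have hLRu : LR * u = 0 := by
    ext i k
    simp only [Matrix.mul_apply, hu, Matrix.of_apply, Matrix.zero_apply]
    have := congrFun h1 i
    simp only [Matrix.mulVec, dotProduct, mul_one, Pi.zero_apply] at this
    rw [← Finset.sum_mul, this, zero_mul]
  have hSSt : S * Sᵀ = 1 - u * uᵀ := by
    rw [← hWWt]; abel
  rw [hSSt, Matrix.mul_sub, Matrix.mul_one, ← Matrix.mul_assoc, hLRu,
    Matrix.zero_mul, sub_zero]

end HurwitzAux

open HurwitzAux

/-- Under Assumptions 1 and 2, the closed-loop matrix `A` is Hurwitz: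
every eigenvalue of `A` (as a complex matrix) has negative real part. -/
theorem stmt_1 {n : ℕ} (hn : 2 ≤ n)
    (m e kw kv kd kdi : Fin n → ℝ)
    (hm : ∀ i, 0 < m i) (he : ∀ i, 0 < e i) (hkw : ∀ i, 0 < kw i)
    (hkv : ∀ i, 0 < kv i) (hkd : ∀ i, 0 < kd i) (hkdi : ∀ i, 0 < kdi i)
    (LR Leta Lphi : Matrix (Fin n) (Fin n) ℝ)
    (hLR : IsConnLaplacian LR) (hLeta : IsConnLaplacian Leta)
    (hLphi : IsConnLaplacian Lphi)
    (S : Matrix (Fin n) (Fin (n - 1)) ℝ)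
    (hS : Sᵀ * S = 1) (hS1 : Sᵀ *ᵥ (fun _ => (1 : ℝ)) = 0)
    (Vnom γ kphi : ℝ) (hVnom : 0 < Vnom) (hγ : 0 < γ) (hkphi : 0 < kphi)
    -- Assumption 1
    (hass1 : Lphi = kphi • LR)
    -- Assumption 2
    (hass2 : γ > kphi / (4 * Vnom))
    (A : Matrix (Idx n) (Idx n) ℝ)
    (hA : A = closedLoopA (Matrix.diagonal m) (Matrix.diagonal e)
      (Matrix.diagonal kw) (Matrix.diagonal kv) (Matrix.diagonal kd)
      (Matrix.diagonal kdi) LR Leta Lphi S Vnom γ) :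
    ∀ μ ∈ spectrum ℂ (A.map (Complex.ofReal ·)), μ.re < 0 := by
  classical
  intro μ hμ
  -- extract an eigenvector
  have hsp : μ ∈ spectrum ℂ (Matrix.toLinAlgEquiv' (A.map (Complex.ofReal ·))) := by
    rwa [AlgEquiv.spectrum_eq]
  have hev : Module.End.HasEigenvalue (Matrix.toLinAlgEquiv' (A.map (Complex.ofReal ·))) μ :=
    Module.End.hasEigenvalue_iff_mem_spectrum.mpr hsp
  obtain ⟨v, hv⟩ := hev.exists_hasEigenvector
  have hv0 : v ≠ 0 := hv.right
  have hAv : (A.map (Complex.ofReal ·)) *ᵥ v = μ • v := by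
    have h := hv.apply_eq_smul
    simpa [Matrix.toLinAlgEquiv'_apply] using h
  -- component vectors
  set va : Fin n → ℂ := fun i => v (Sum.inl (Sum.inl i)) with hva_def
  set vb : Fin n → ℂ := fun i => v (Sum.inl (Sum.inr i)) with hvb_def
  set vc : Fin n → ℂ := fun i => v (Sum.inr (Sum.inl i)) with hvc_def
  set vd : Fin (n-1) → ℂ := fun i => v (Sum.inr (Sum.inr i)) with hvd_def
  have hvsum : v = Sum.elim (Sum.elim va vb) (Sum.elim vc vd) := by
    funext k
    rcases k with (i|i)|(i|i) <;> rfl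
  -- inverses of diagonal matrices
  have hKwinv : (Matrix.diagonal kw)⁻¹ = Matrix.diagonal (fun i => (kw i)⁻¹) := by
    apply Matrix.inv_eq_right_inv
    rw [Matrix.diagonal_mul_diagonal,
      show (fun i => kw i * (kw i)⁻¹) = fun _ : Fin n => (1:ℝ) from
        funext fun i => mul_inv_cancel₀ (hkw i).ne', Matrix.diagonal_one]
  have hKvinv : (Matrix.diagonal kv)⁻¹ = Matrix.diagonal (fun i => (kv i)⁻¹) := by
    apply Matrix.inv_eq_right_inv
    rw [Matrix.diagonal_mul_diagonal,
      show (fun i => kv i * (kv i)⁻¹) = fun _ : Fin n => (1:ℝ) from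
        funext fun i => mul_inv_cancel₀ (hkv i).ne', Matrix.diagonal_one]
  -- complexified matrices and auxiliary vectors
  set LRc := LR.map (Complex.ofReal ·) with hLRc_def
  set Lec := Leta.map (Complex.ofReal ·) with hLec_def
  set Sc := S.map (Complex.ofReal ·) with hSc_def
  set Stc := Sᵀ.map (Complex.ofReal ·) with hStc_def
  set ψ := Sc *ᵥ vd with hψ_def
  set w := LRc *ᵥ ψ with hw_def
  set wb := LRc *ᵥ vb with hwb_def
  set wc := Lec *ᵥ vc with hwc_def
  set g0 : Fin n → ℂ := fun i => (((kv i)⁻¹ * kw i : ℝ) : ℂ) * va i with hg0_def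
  -- rewrite the eigen-equation blockwise
  rw [hA, hvsum] at hAv
  simp only [closedLoopA, hass1, hKwinv, hKvinv, Matrix.diagonal_add, Matrix.smul_mul,
    Matrix.mul_smul, Matrix.mul_add, Matrix.mul_assoc, Matrix.diagonal_mul_diagonal,
    Matrix.fromBlocks_map, mmap_neg, mmap_add, mmap_smul, mmap_mul, mmap_diagonal,
    mmap_one, mmap_zero, Matrix.fromBlocks_mulVec] at hAv
  have hdiagmv : Matrix.diagonal (fun i => (((kv i)⁻¹ * kw i : ℝ) : ℂ)) *ᵥ va = g0 := by
    funext i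
    rw [Matrix.mulVec_diagonal]
  have heq1 : ∀ i, μ * va i =
      -(((m i * (kd i + kw i) : ℝ) : ℂ) * va i)
      + ((m i * kv i : ℝ) : ℂ) * vb i
      - ((m i * (kv i * (kw i)⁻¹ * kdi i) : ℝ) : ℂ) * vc i
      - ((kphi * m i : ℝ) : ℂ) * w i := by
    intro i
    have h := congrFun hAv (Sum.inl (Sum.inl i))
    simp only [Sum.elim_inl, Sum.elim_inr, Pi.add_apply, Matrix.neg_mulVec,
      Matrix.add_mulVec, Matrix.smul_mulVec, Matrix.mulVec_add,
      ← Matrix.mulVec_mulVec, Matrix.mulVec_diagonal, Matrix.zero_mulVec, Pi.zero_apply,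
      Pi.neg_apply, Pi.smul_apply, smul_eq_mul, Matrix.one_mulVec,
      Sum.elim_comp_inl, Sum.elim_comp_inr,
      ← hLRc_def, ← hLec_def, ← hSc_def, ← hStc_def,
      ← hψ_def, ← hw_def, ← hwb_def, ← hwc_def] at h
    push_cast at h ⊢
    linear_combination -h
  have heq2 : ∀ i, μ * vb i =
      ((1/Vnom * (e i * kw i) : ℝ) : ℂ) * va i
      - (((e i : ℝ) : ℂ) * wb i + ((1/Vnom * (e i * kv i) : ℝ) : ℂ) * vb i)
      + ((1/Vnom * (kphi * e i) : ℝ) : ℂ) * w i := by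
    intro i
    have h := congrFun hAv (Sum.inl (Sum.inr i))
    simp only [Sum.elim_inl, Sum.elim_inr, Pi.add_apply, Matrix.neg_mulVec,
      Matrix.add_mulVec, Matrix.smul_mulVec, Matrix.mulVec_add,
      ← Matrix.mulVec_mulVec, Matrix.mulVec_diagonal, Matrix.zero_mulVec, Pi.zero_apply,
      Pi.neg_apply, Pi.smul_apply, smul_eq_mul, Matrix.one_mulVec,
      Sum.elim_comp_inl, Sum.elim_comp_inr,
      ← hLRc_def, ← hLec_def, ← hSc_def, ← hStc_def,
      ← hψ_def, ← hw_def, ← hwb_def, ← hwc_def] at h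
    push_cast at h ⊢
    linear_combination -h
  have heq3 : ∀ i, μ * vc i = ((kdi i : ℝ) : ℂ) * va i - wc i := by
    intro i
    have h := congrFun hAv (Sum.inr (Sum.inl i))
    simp only [Sum.elim_inl, Sum.elim_inr, Pi.add_apply, Matrix.neg_mulVec,
      Matrix.add_mulVec, Matrix.smul_mulVec, Matrix.mulVec_add,
      ← Matrix.mulVec_mulVec, Matrix.mulVec_diagonal, Matrix.zero_mulVec, Pi.zero_apply,
      Pi.neg_apply, Pi.smul_apply, smul_eq_mul, Matrix.one_mulVec,
      Sum.elim_comp_inl, Sum.elim_comp_inr,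
      ← hLRc_def, ← hLec_def, ← hSc_def, ← hStc_def,
      ← hψ_def, ← hw_def, ← hwb_def, ← hwc_def] at h
    push_cast at h ⊢
    linear_combination -h
  have heq4 : ∀ j, μ * vd j = (Stc *ᵥ g0) j - ((γ : ℝ) : ℂ) * vd j := by
    intro j
    have h := congrFun hAv (Sum.inr (Sum.inr j))
    simp only [Sum.elim_inl, Sum.elim_inr, Pi.add_apply, Matrix.neg_mulVec,
      Matrix.add_mulVec, Matrix.smul_mulVec, Matrix.mulVec_add,
      ← Matrix.mulVec_mulVec, Matrix.mulVec_diagonal, Matrix.zero_mulVec, Pi.zero_apply,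
      Pi.neg_apply, Pi.smul_apply, smul_eq_mul, Matrix.one_mulVec, hdiagmv,
      Sum.elim_comp_inl, Sum.elim_comp_inr,
      ← hLRc_def, ← hLec_def, ← hSc_def, ← hStc_def,
      ← hψ_def, ← hw_def, ← hwb_def, ← hwc_def] at h
    push_cast at h ⊢
    linear_combination -h
  clear hAv hμ hsp hev hv
  -- projection identity (complexified)
  have hprojc : LRc * (Sc * Stc) = LRc := by
    have hp := proj_lemma hn LR hLR.2.1 S hS hS1
    calc LRc * (Sc * Stc) = (LR * (S * Sᵀ)).map (Complex.ofReal ·) := by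
          rw [mmap_mul, mmap_mul, hLRc_def, hSc_def, hStc_def]
      _ = LRc := by rw [hp, hLRc_def]
  have hScSt : Stc * Sc = 1 := by
    rw [hStc_def, hSc_def, ← mmap_mul, hS, mmap_one]
  -- PSD factorizations
  obtain ⟨BL, hBL1, hBL2⟩ := herm_split LR hLR.1
  obtain ⟨BE, hBE1, hBE2⟩ := herm_split Leta hLeta.1
  simp only [← hLRc_def] at hBL1 hBL2
  simp only [← hLec_def] at hBE1 hBE2
  -- scalar quantities
  set Hb : ℝ := (star vb ⬝ᵥ wb).re with hHb_def
  set rP : ℝ := (star vb ⬝ᵥ w).re with hrP_def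
  set hP : ℝ := (star ψ ⬝ᵥ w).re with hhP_def
  set hC : ℝ := (star vc ⬝ᵥ wc).re with hhC_def
  set rga0 : ℝ := (star g0 ⬝ᵥ w).re with hrga0_def
  have hHb_nonneg : 0 ≤ Hb := by
    rw [hHb_def, hwb_def, hBL1]; exact redot_self_nonneg _
  have hhP_nonneg : 0 ≤ hP := by
    rw [hhP_def, hw_def, hBL1]; exact redot_self_nonneg _
  have hhC_nonneg : 0 ≤ hC := by
    rw [hhC_def, hwc_def, hBE1]; exact redot_self_nonneg _
  have him0 : (star ψ ⬝ᵥ w).im = 0 := by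
    rw [hw_def, hBL1]; exact dot_self_im _
  have hrga : (star ψ ⬝ᵥ (LRc *ᵥ g0)).re = rga0 := by
    rw [hBL1, redot_comm, hrga0_def, hw_def, hBL1]
  -- derivative of the 4th energy piece
  have h2' : μ • vd = (Stc *ᵥ g0) - ((γ : ℝ) : ℂ) • vd := by
    funext j
    simp only [Pi.smul_apply, smul_eq_mul, Pi.sub_apply]
    rw [heq4 j]
  have h2 : μ • ψ = Sc *ᵥ ((Stc *ᵥ g0) - ((γ : ℝ) : ℂ) • vd) := by
    rw [hψ_def, ← Matrix.mulVec_smul, h2']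
  have h3 : LRc *ᵥ (Sc *ᵥ ((Stc *ᵥ g0) - ((γ : ℝ) : ℂ) • vd)) =
      (LRc *ᵥ g0) - ((γ : ℝ) : ℂ) • w := by
    rw [Matrix.mulVec_sub, Matrix.mulVec_sub, Matrix.mulVec_smul, Matrix.mulVec_smul,
      ← hψ_def, ← hw_def, Matrix.mulVec_mulVec, Matrix.mulVec_mulVec,
      Matrix.mul_assoc, hprojc]
  have hT4 : μ.re * hP = rga0 - γ * hP := by
    have h1 : star ψ ⬝ᵥ (LRc *ᵥ (μ • ψ)) = μ * (star ψ ⬝ᵥ w) := by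
      rw [Matrix.mulVec_smul, ← hw_def, dotProduct_smul, smul_eq_mul]
    have hc1 : μ.re * hP = (μ * (star ψ ⬝ᵥ w)).re := by
      rw [Complex.mul_re, him0, mul_zero, sub_zero, hhP_def]
    rw [hc1, ← h1, h2, h3, dotProduct_sub, dotProduct_smul]
    simp only [Complex.sub_re, smul_eq_mul, Complex.mul_re, Complex.ofReal_re,
      Complex.ofReal_im, zero_mul, sub_zero]
    rw [hrga, hhP_def]
  -- the per-index Lyapunov identity
  set Gv : Fin n → ℝ := fun i =>
    -(kw i * (kd i + kw i) * (kv i)⁻¹) * ((va i).re^2 + (va i).im^2)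
    + 2 * kw i * ((va i).re * (vb i).re + (va i).im * (vb i).im)
    - kv i * ((vb i).re^2 + (vb i).im^2) with hGv_def
  have hsum : ∀ i,
      μ.re * (kw i * (kv i)⁻¹ * (m i)⁻¹ * ((va i).re^2 + (va i).im^2)
        + Vnom * (e i)⁻¹ * ((vb i).re^2 + (vb i).im^2)
        + ((vc i).re^2 + (vc i).im^2))
      = Gv i
        - Vnom * ((vb i).re * (wb i).re + (vb i).im * (wb i).im)
        + kphi * ((vb i).re * (w i).re + (vb i).im * (w i).im)
        - kphi * ((kv i)⁻¹ * kw i * ((va i).re * (w i).re + (va i).im * (w i).im))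
        - ((vc i).re * (wc i).re + (vc i).im * (wc i).im) := by
    intro i
    have e1 : μ.re * (kw i * (kv i)⁻¹ * (m i)⁻¹ * ((va i).re^2 + (va i).im^2)
        + Vnom * (e i)⁻¹ * ((vb i).re^2 + (vb i).im^2)
        + ((vc i).re^2 + (vc i).im^2))
        = kw i * (kv i)⁻¹ * (m i)⁻¹ *
            ((va i).re * (μ * va i).re + (va i).im * (μ * va i).im)
          + Vnom * (e i)⁻¹ *
            ((vb i).re * (μ * vb i).re + (vb i).im * (μ * vb i).im)
          + ((vc i).re * (μ * vc i).re + (vc i).im * (μ * vc i).im) := by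
      simp only [Complex.mul_re, Complex.mul_im]
      ring
    rw [e1, heq1 i, heq2 i, heq3 i]
    simp only [Complex.add_re, Complex.add_im, Complex.sub_re, Complex.sub_im,
      Complex.neg_re, Complex.neg_im, Complex.mul_re, Complex.mul_im,
      Complex.ofReal_re, Complex.ofReal_im, hGv_def]
    field_simp [(hm i).ne', (he i).ne', (hkw i).ne', (hkv i).ne', hVnom.ne']
    ring
  -- sum up
  have hsumS : μ.re * (∑ i, (kw i * (kv i)⁻¹ * (m i)⁻¹ * ((va i).re^2 + (va i).im^2)
        + Vnom * (e i)⁻¹ * ((vb i).re^2 + (vb i).im^2)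
        + ((vc i).re^2 + (vc i).im^2)))
      = (∑ i, Gv i) - Vnom * Hb + kphi * rP - kphi * rga0 - hC := by
    rw [Finset.mul_sum]
    rw [Finset.sum_congr rfl (fun i _ => hsum i)]
    have hHbs : Hb = ∑ i, ((vb i).re * (wb i).re + (vb i).im * (wb i).im) := by
      rw [hHb_def, redot_eq]
    have hrPs : rP = ∑ i, ((vb i).re * (w i).re + (vb i).im * (w i).im) := by
      rw [hrP_def, redot_eq]
    have hCs : hC = ∑ i, ((vc i).re * (wc i).re + (vc i).im * (wc i).im) := by
      rw [hhC_def, redot_eq]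
    have hrgas : rga0 = ∑ i,
        ((kv i)⁻¹ * kw i * ((va i).re * (w i).re + (va i).im * (w i).im)) := by
      rw [hrga0_def, redot_eq]
      refine Finset.sum_congr rfl fun i _ => ?_
      simp only [hg0_def, Complex.mul_re, Complex.mul_im, Complex.ofReal_re,
        Complex.ofReal_im]
      ring
    rw [hHbs, hrPs, hCs, hrgas, Finset.mul_sum, Finset.mul_sum, Finset.mul_sum,
      ← Finset.sum_sub_distrib, ← Finset.sum_add_distrib, ← Finset.sum_sub_distrib,
      ← Finset.sum_sub_distrib]
  -- quadratic bound between the LR-cross terms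
  have hquad : kphi * rP ≤ Vnom * Hb + kphi^2/(4*Vnom) * hP := by
    set sv := Real.sqrt Vnom with hsv_def
    have hsv : sv^2 = Vnom := Real.sq_sqrt hVnom.le
    have hsvpos : 0 < sv := Real.sqrt_pos.2 hVnom
    have hq := quad_ineq (BL *ᵥ vb) (BL *ᵥ ψ) sv (kphi/(2*sv))
    rw [← hBL1 vb ψ, ← hBL1 vb vb, ← hBL1 ψ ψ, ← hw_def, ← hwb_def,
      ← hHb_def, ← hrP_def, ← hhP_def] at hq
    have e1 : 2*(sv*(kphi/(2*sv))) = kphi := by field_simp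
    have e2 : (kphi/(2*sv))^2 = kphi^2/(4*Vnom) := by
      rw [div_pow, mul_pow, hsv]; norm_num
    rw [e1, e2, hsv] at hq
    exact hq
  -- per-index negativity
  have hGle : ∀ i, Gv i ≤ -(kw i * kd i * (kv i)⁻¹ * ((va i).re^2 + (va i).im^2)) := by
    intro i
    have hid : Gv i + kw i * kd i * (kv i)⁻¹ * ((va i).re^2 + (va i).im^2)
        = -((kv i)⁻¹ * ((kw i * (va i).re - kv i * (vb i).re)^2
            + (kw i * (va i).im - kv i * (vb i).im)^2)) := by
      rw [hGv_def]
      field_simp [(hkv i).ne']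
      ring
    have hnn : 0 ≤ (kv i)⁻¹ * ((kw i * (va i).re - kv i * (vb i).re)^2
        + (kw i * (va i).im - kv i * (vb i).im)^2) :=
      mul_nonneg (inv_nonneg.2 (hkv i).le) (add_nonneg (sq_nonneg _) (sq_nonneg _))
    linarith [hid, hnn]
  have hGle0 : ∀ i, Gv i ≤ 0 := by
    intro i
    have h2 : (0:ℝ) ≤ kw i * kd i * (kv i)⁻¹ * ((va i).re^2 + (va i).im^2) :=
      mul_nonneg (mul_nonneg (mul_nonneg (hkw i).le (hkd i).le) (inv_nonneg.2 (hkv i).le))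
        (add_nonneg (sq_nonneg ((va i).re)) (sq_nonneg ((va i).im)))
    exact (hGle i).trans (neg_nonpos.mpr h2)
  -- now suppose μ.re ≥ 0 and derive a contradiction
  by_contra hcon
  push_neg at hcon
  have hE3 : 0 ≤ ∑ i, (kw i * (kv i)⁻¹ * (m i)⁻¹ * ((va i).re^2 + (va i).im^2)
        + Vnom * (e i)⁻¹ * ((vb i).re^2 + (vb i).im^2)
        + ((vc i).re^2 + (vc i).im^2)) := by
    refine Finset.sum_nonneg fun i _ => ?_
    have h1 : 0 ≤ kw i * (kv i)⁻¹ * (m i)⁻¹ * ((va i).re^2 + (va i).im^2) :=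
      mul_nonneg (mul_nonneg (mul_nonneg (hkw i).le (inv_nonneg.2 (hkv i).le))
        (inv_nonneg.2 (hm i).le)) (add_nonneg (sq_nonneg _) (sq_nonneg _))
    have h2 : 0 ≤ Vnom * (e i)⁻¹ * ((vb i).re^2 + (vb i).im^2) :=
      mul_nonneg (mul_nonneg hVnom.le (inv_nonneg.2 (he i).le))
        (add_nonneg (sq_nonneg _) (sq_nonneg _))
    have h3 : 0 ≤ ((vc i).re^2 + (vc i).im^2) := by positivity
    linarith
  have hLHS : 0 ≤ μ.re * (∑ i, (kw i * (kv i)⁻¹ * (m i)⁻¹ * ((va i).re^2 + (va i).im^2)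
        + Vnom * (e i)⁻¹ * ((vb i).re^2 + (vb i).im^2)
        + ((vc i).re^2 + (vc i).im^2))) + kphi * (μ.re * hP) :=
    add_nonneg (mul_nonneg hcon hE3) (mul_nonneg hkphi.le (mul_nonneg hcon hhP_nonneg))
  have hT4k : kphi * (μ.re * hP) = kphi * rga0 - kphi * (γ * hP) := by
    linear_combination kphi * hT4
  have hRHS : 0 ≤ (∑ i, Gv i) - Vnom * Hb + kphi * rP - kphi * (γ * hP) - hC := by
    linarith [hsumS, hT4k, hLHS]
  have hSGle : (∑ i, Gv i) ≤ 0 := Finset.sum_nonpos fun i _ => hGle0 i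
  have hcoef : kphi^2/(4*Vnom) - kphi * γ < 0 := by
    have h1 : kphi * (kphi / (4*Vnom)) < kphi * γ := by
      exact mul_lt_mul_of_pos_left hass2 hkphi
    have h2 : kphi * (kphi / (4*Vnom)) = kphi^2/(4*Vnom) := by ring
    linarith
  have hψ0 : hP = 0 := by
    have hb1 : 0 ≤ (∑ i, Gv i) + kphi^2/(4*Vnom) * hP - kphi * (γ * hP) - hC := by
      linarith [hRHS, hquad]
    have he' : kphi^2/(4*Vnom) * hP - kphi * (γ * hP)
        = (kphi^2/(4*Vnom) - kphi * γ) * hP := by ring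
    have hb3 : 0 ≤ (kphi^2/(4*Vnom) - kphi * γ) * hP := by
      linarith [hb1, hSGle, hhC_nonneg, he']
    have hb2 : (kphi^2/(4*Vnom) - kphi * γ) * hP ≤ 0 :=
      mul_nonpos_of_nonpos_of_nonneg hcoef.le hhP_nonneg
    have hb4 : (kphi^2/(4*Vnom) - kphi * γ) * hP = 0 := le_antisymm hb2 hb3
    rcases mul_eq_zero.1 hb4 with h | h
    · exact absurd h hcoef.ne
    · exact h
  have hGv0 : ∀ i, Gv i = 0 := by
    intro i
    have hq' := hquad
    have hR' := hRHS
    simp only [hψ0, mul_zero, sub_zero, add_zero] at hq' hR'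
    have hb1 : 0 ≤ (∑ j, Gv j) - hC := by linarith [hR', hq']
    have hSG0 : (∑ j, Gv j) = 0 := by linarith [hb1, hSGle, hhC_nonneg]
    exact (Finset.sum_eq_zero_iff_of_nonpos (fun j _ => hGle0 j)).1 hSG0 i (Finset.mem_univ i)
  have hva0 : ∀ i, va i = 0 := by
    intro i
    have h1 := hGle i
    rw [hGv0 i] at h1
    have h2 : 0 < kw i * kd i * (kv i)⁻¹ :=
      mul_pos (mul_pos (hkw i) (hkd i)) (inv_pos.2 (hkv i))
    have hX : kw i * kd i * (kv i)⁻¹ * ((va i).re^2 + (va i).im^2) ≤ 0 := neg_nonneg.mp h1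
    have h3 : (va i).re^2 + (va i).im^2 ≤ 0 := by
      by_contra hpos
      push_neg at hpos
      exact absurd hX (not_le.mpr (mul_pos h2 hpos))
    have h4 : (va i).re ^ 2 = 0 := by
      linarith [sq_nonneg ((va i).re), sq_nonneg ((va i).im)]
    have h5 : (va i).im ^ 2 = 0 := by
      linarith [sq_nonneg ((va i).re), sq_nonneg ((va i).im)]
    exact Complex.ext (pow_eq_zero_iff two_ne_zero |>.mp h4)
      (pow_eq_zero_iff two_ne_zero |>.mp h5)
  have hvb0 : ∀ i, vb i = 0 := by
    intro i
    have hGvi : Gv i = -(kv i * ((vb i).re^2 + (vb i).im^2)) := by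
      simp only [hGv_def, hva0 i, Complex.zero_re, Complex.zero_im]
      ring
    have h1 : kv i * ((vb i).re^2 + (vb i).im^2) = 0 := by
      have := hGv0 i
      rw [hGvi] at this
      linarith [this]
    have hB : (vb i).re^2 + (vb i).im^2 = 0 := by
      rcases mul_eq_zero.1 h1 with h | h
      · exact absurd h (hkv i).ne'
      · exact h
    have h4 : (vb i).re ^ 2 = 0 := by
      linarith [sq_nonneg ((vb i).re), sq_nonneg ((vb i).im)]
    have h5 : (vb i).im ^ 2 = 0 := by
      linarith [sq_nonneg ((vb i).re), sq_nonneg ((vb i).im)]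
    exact Complex.ext (pow_eq_zero_iff two_ne_zero |>.mp h4)
      (pow_eq_zero_iff two_ne_zero |>.mp h5)
  have hw0 : w = 0 := by
    have h1 : (star (BL *ᵥ ψ) ⬝ᵥ (BL *ᵥ ψ)).re = 0 := by
      rw [← hBL1 ψ ψ, ← hw_def, ← hhP_def]; exact hψ0
    have h2 : BL *ᵥ ψ = 0 := redot_self_eq_zero h1
    rw [hw_def, ← hBL2 ψ, h2, Matrix.mulVec_zero]
  have hvc0 : ∀ i, vc i = 0 := by
    intro i
    have h1 := heq1 i
    have hwi : w i = 0 := by rw [hw0]; rfl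
    rw [hva0 i, hvb0 i, hwi] at h1
    simp only [mul_zero, neg_zero, zero_add, sub_zero, zero_sub] at h1
    have h2 : ((m i * (kv i * (kw i)⁻¹ * kdi i) : ℝ) : ℂ) ≠ 0 := by
      rw [Complex.ofReal_ne_zero]
      have : 0 < m i * (kv i * (kw i)⁻¹ * kdi i) :=
        mul_pos (hm i) (mul_pos (mul_pos (hkv i) (inv_pos.2 (hkw i))) (hkdi i))
      exact this.ne'
    have h3 : ((m i * (kv i * (kw i)⁻¹ * kdi i) : ℝ) : ℂ) * vc i = 0 := by
      linear_combination h1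
    rcases mul_eq_zero.1 h3 with h | h
    · exact absurd h h2
    · exact h
  have hvd0 : ∀ j, vd j = 0 := by
    have hLRψ : LRc *ᵥ ψ = 0 := by rw [← hw_def, hw0]
    obtain ⟨z, hz⟩ := kernel_c LR hLR.2.2 ψ (by rw [← hLRc_def]; exact hLRψ)
    have hvd : vd = Stc *ᵥ ψ := by
      rw [hψ_def, Matrix.mulVec_mulVec, hScSt, Matrix.one_mulVec]
    have hr : ∀ j0 : Fin (n-1), (∑ i, Sᵀ j0 i) = 0 := by
      intro j0
      have := congrFun hS1 j0
      simpa [Matrix.mulVec, dotProduct] using this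
    have hzero : Stc *ᵥ (fun _ : Fin n => z) = 0 := by
      funext j0
      simp only [Matrix.mulVec, dotProduct, hStc_def, Matrix.map_apply,
        Pi.zero_apply]
      rw [← Finset.sum_mul, ← Complex.ofReal_sum, hr j0, Complex.ofReal_zero, zero_mul]
    intro j
    rw [hvd, hz, hzero]
    rfl
  have : v = 0 := by
    funext k
    rcases k with (i|i)|(i|i)
    · exact hva0 i
    · exact hvb0 i
    · exact hvc0 i
    · exact hvd0 i
  exact hv0 this
end

section
/- Under Assumptions 1 and 2, the closed-loop system matrix A is invertible; consequently, for every constant disturbance vector b ∈ ℝ^{3n+(n−1)} the affine system x' = A x + b has a unique equilibrium. -/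
open Matrix Filter

/-- Auxiliary: the kernel of `Sᵀ` is spanned by the all-ones vector. -/
lemma kerST {n : ℕ} (hn : 2 ≤ n) (S : Matrix (Fin n) (Fin (n-1)) ℝ)
    (hS : Sᵀ * S = 1) (hS1 : Sᵀ *ᵥ (fun _ => (1:ℝ)) = 0)
    (d : Fin n → ℝ) (hd : Sᵀ *ᵥ d = 0) : ∃ c : ℝ, d = fun _ => c := by
  classical
  set f := Matrix.mulVecLin Sᵀ with hf
  have hsurj : Function.Surjective f := by
    intro y
    refine ⟨S *ᵥ y, ?_⟩
    show Sᵀ *ᵥ (S *ᵥ y) = y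
    rw [Matrix.mulVec_mulVec, hS, Matrix.one_mulVec]
  have hrange : LinearMap.range f = ⊤ := LinearMap.range_eq_top.2 hsurj
  have hker : Module.finrank ℝ (LinearMap.ker f) = 1 := by
    have h1 := LinearMap.finrank_range_add_finrank_ker f
    rw [hrange] at h1
    rw [finrank_top] at h1; simp [Module.finrank_pi] at h1
    omega
  have hone : (fun _ => (1:ℝ) : Fin n → ℝ) ∈ LinearMap.ker f := by
    show Sᵀ *ᵥ (fun _ => (1:ℝ)) = 0
    exact hS1
  have honene : (fun _ => (1:ℝ) : Fin n → ℝ) ≠ 0 := by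
    intro h
    have := congrFun h ⟨0, by omega⟩
    simp at this
  have hspan : (Submodule.span ℝ {(fun _ => (1:ℝ) : Fin n → ℝ)}) = LinearMap.ker f := by
    apply Submodule.eq_of_le_of_finrank_le
    · rw [Submodule.span_le]; simpa using hone
    · rw [hker, finrank_span_singleton honene]
  have hdmem : d ∈ LinearMap.ker f := hd
  rw [← hspan, Submodule.mem_span_singleton] at hdmem
  obtain ⟨c, hc⟩ := hdmem
  exact ⟨c, by rw [← hc]; funext i; simp⟩

/-- Under Assumptions 1 and 2, the closed-loop matrix `A` is invertible, and
hence for every constant disturbance `b` the affine system `ẋ = A x + b`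
has a unique equilibrium. -/
theorem stmt_2 {n : ℕ} (hn : 2 ≤ n)
    (m e kw kv kd kdi : Fin n → ℝ)
    (hm : ∀ i, 0 < m i) (he : ∀ i, 0 < e i) (hkw : ∀ i, 0 < kw i)
    (hkv : ∀ i, 0 < kv i) (hkd : ∀ i, 0 < kd i) (hkdi : ∀ i, 0 < kdi i)
    (LR Leta Lphi : Matrix (Fin n) (Fin n) ℝ)
    (hLR : IsConnLaplacian LR) (hLeta : IsConnLaplacian Leta)
    (hLphi : IsConnLaplacian Lphi)
    (S : Matrix (Fin n) (Fin (n - 1)) ℝ)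
    (hS : Sᵀ * S = 1) (hS1 : Sᵀ *ᵥ (fun _ => (1 : ℝ)) = 0)
    (Vnom γ kphi : ℝ) (hVnom : 0 < Vnom) (hγ : 0 < γ) (hkphi : 0 < kphi)
    -- Assumption 1
    (hass1 : Lphi = kphi • LR)
    -- Assumption 2
    (hass2 : γ > kphi / (4 * Vnom))
    (A : Matrix (Idx n) (Idx n) ℝ)
    (hA : A = closedLoopA (Matrix.diagonal m) (Matrix.diagonal e)
      (Matrix.diagonal kw) (Matrix.diagonal kv) (Matrix.diagonal kd)
      (Matrix.diagonal kdi) LR Leta Lphi S Vnom γ) :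
    IsUnit A ∧ ∀ b : Idx n → ℝ, ∃! x : Idx n → ℝ, A *ᵥ x + b = 0 := by
  classical
  have hLRsym : LRᵀ = LR := by simpa [Matrix.IsSymm] using hLR.1.1
  have hsymQ : ∀ a b : Fin n → ℝ, a ⬝ᵥ (LR *ᵥ b) = b ⬝ᵥ (LR *ᵥ a) := by
    intro a b
    rw [Matrix.dotProduct_mulVec, ← Matrix.mulVec_transpose, hLRsym, dotProduct_comm]
  have hQnn : ∀ a : Fin n → ℝ, (0:ℝ) ≤ a ⬝ᵥ (LR *ᵥ a) := by
    intro a; simpa using hLR.1.dotProduct_mulVec_nonneg a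
  have hLetann : ∀ a : Fin n → ℝ, (0:ℝ) ≤ a ⬝ᵥ (Leta *ᵥ a) := by
    intro a; simpa using hLeta.1.dotProduct_mulVec_nonneg a
  have hdot : ∀ a b : Fin n → ℝ, a ⬝ᵥ b = ∑ i, a i * b i := fun a b => rfl
  have hKwinv : (Matrix.diagonal kw)⁻¹ = Matrix.diagonal (fun i => (kw i)⁻¹) := by
    apply Matrix.inv_eq_right_inv
    rw [Matrix.diagonal_mul_diagonal]
    convert Matrix.diagonal_one with i
    exact mul_inv_cancel₀ (hkw i).ne'
  have hKVinv : (Matrix.diagonal kv)⁻¹ = Matrix.diagonal (fun i => (kv i)⁻¹) := by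
    apply Matrix.inv_eq_right_inv
    rw [Matrix.diagonal_mul_diagonal]
    convert Matrix.diagonal_one with i
    exact mul_inv_cancel₀ (hkv i).ne'
  -- the kernel of A is trivial
  have hker : ∀ x : Idx n → ℝ, A *ᵥ x = 0 → x = 0 := by
    intro x hx
    obtain ⟨ω, V, η, φ, hxeq⟩ : ∃ (ω V η : Fin n → ℝ) (φ : Fin (n-1) → ℝ),
        x = Sum.elim (Sum.elim ω V) (Sum.elim η φ) :=
      ⟨_, _, _, _, by funext i; rcases i with (i|i)|(i|i) <;> rfl⟩
    rw [hxeq, hA] at hx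
    unfold closedLoopA at hx
    rw [Matrix.fromBlocks_mulVec] at hx
    simp only [Sum.elim_comp_inl, Sum.elim_comp_inr, Matrix.fromBlocks_mulVec] at hx
    obtain ⟨w, hwdef⟩ : ∃ w : Fin n → ℝ, w = S *ᵥ φ := ⟨_, rfl⟩
    obtain ⟨Lw, hLwdef⟩ : ∃ Lw : Fin n → ℝ, Lw = Lphi *ᵥ w := ⟨_, rfl⟩
    obtain ⟨u, huk⟩ : ∃ u : Fin n → ℝ, ∀ i, kv i * u i = kw i * ω i :=
      ⟨fun i => (kv i)⁻¹ * (kw i * ω i), fun i => mul_inv_cancel_left₀ (hkv i).ne' _⟩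
    -- extract the four block equations
    have E1 : ∀ i, (kd i + kw i) * ω i
        = kv i * V i - kv i * (kw i)⁻¹ * kdi i * η i - Lw i := by
      intro i
      have h := congrFun hx (Sum.inl (Sum.inl i))
      rw [hKwinv] at h
      simp only [Sum.elim_inl, Sum.elim_inr, Matrix.neg_mulVec, Pi.neg_apply, Pi.add_apply,
        Pi.zero_apply, ← Matrix.mulVec_mulVec, Matrix.add_mulVec,
        Matrix.mulVec_diagonal] at h
      apply mul_left_cancel₀ (hm i).ne'
      rw [hLwdef, hwdef]
      linear_combination -h
    have E2 : ∀ i, kw i * ω i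
        = Vnom * (LR *ᵥ V) i + kv i * V i - Lw i := by
      intro i
      have h := congrFun hx (Sum.inl (Sum.inr i))
      simp only [Sum.elim_inl, Sum.elim_inr, Matrix.neg_mulVec, Pi.neg_apply, Pi.add_apply,
        Pi.zero_apply, Matrix.smul_mulVec, Pi.smul_apply, smul_eq_mul,
        ← Matrix.mulVec_mulVec, Matrix.add_mulVec, Matrix.mulVec_diagonal,
        Matrix.zero_mulVec] at h
      rw [hLwdef, hwdef]
      have hV : Vnom ≠ 0 := hVnom.ne'
      have he' : e i ≠ 0 := (he i).ne'
      field_simp at h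
      apply mul_left_cancel₀ he'
      linear_combination h
    have E3 : ∀ i, kdi i * ω i = (Leta *ᵥ η) i := by
      intro i
      have h := congrFun hx (Sum.inr (Sum.inl i))
      simp only [Sum.elim_inl, Sum.elim_inr, Matrix.neg_mulVec, Pi.neg_apply, Pi.add_apply,
        Pi.zero_apply, Matrix.mulVec_diagonal, Matrix.zero_mulVec] at h
      linear_combination h
    have E4 : ∀ j, (Sᵀ *ᵥ u) j = γ * φ j := by
      intro j
      have h := congrFun hx (Sum.inr (Sum.inr j))
      rw [hKVinv] at h
      simp only [Sum.elim_inl, Sum.elim_inr, Matrix.neg_mulVec, Pi.neg_apply, Pi.add_apply,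
        Pi.zero_apply, ← Matrix.mulVec_mulVec, Matrix.mulVec_diagonal,
        Matrix.zero_mulVec, Matrix.smul_mulVec, Matrix.one_mulVec,
        Pi.smul_apply, smul_eq_mul] at h
      have hu2 : Matrix.diagonal (fun i => (kv i)⁻¹) *ᵥ (Matrix.diagonal kw *ᵥ ω) = u := by
        funext i
        simp only [Matrix.mulVec_diagonal]
        apply mul_left_cancel₀ (hkv i).ne'
        rw [mul_inv_cancel_left₀ (hkv i).ne']
        exact (huk i).symm
      rw [hu2] at h
      linear_combination h
    -- φ = Sᵀ w and the constant-shift relation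
    have hφw : φ = Sᵀ *ᵥ w := by
      rw [hwdef, Matrix.mulVec_mulVec, hS, Matrix.one_mulVec]
    have hdker : Sᵀ *ᵥ (u - γ • w) = 0 := by
      rw [Matrix.mulVec_sub, Matrix.mulVec_smul]
      funext j
      have h := E4 j
      rw [hφw] at h
      simp only [Pi.sub_apply, Pi.smul_apply, smul_eq_mul, Pi.zero_apply]
      linarith [h]
    obtain ⟨c, hc⟩ := kerST hn S hS hS1 _ hdker
    have huc : u = γ • w + (fun _ => c) := by
      funext i
      have h := congrFun hc i
      simp only [Pi.sub_apply, Pi.smul_apply, smul_eq_mul] at h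
      simp only [Pi.add_apply, Pi.smul_apply, smul_eq_mul]
      linarith [h]
    have hLphiu : Lphi *ᵥ u = γ • Lw := by
      rw [huc, Matrix.mulVec_add, Matrix.mulVec_smul]
      have h1 : Lphi *ᵥ (fun _ => c) = 0 := by
        have hcc : (fun _ => c : Fin n → ℝ) = c • (fun _ => (1:ℝ)) := by
          funext i; simp
        rw [hcc, Matrix.mulVec_smul, hLphi.2.1, smul_zero]
      rw [h1, add_zero, hLwdef]
    have hLw : ∀ i, Lw i = (kphi/γ) * (LR *ᵥ u) i := by
      intro i
      have h := congrFun hLphiu i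
      rw [hass1] at h
      simp only [Matrix.smul_mulVec, Pi.smul_apply, smul_eq_mul] at h
      field_simp
      linarith [h]
    -- energy identity
    obtain ⟨t, htdef⟩ : ∃ t : Fin n → ℝ, ∀ i, t i =
        u i * ((kd i + kw i) * ω i) - 2*(kw i * ω i * V i) + kv i * V i^2 :=
      ⟨_, fun i => rfl⟩
    have hkvt : ∀ i, kv i * t i = kd i * kw i * ω i^2 + (kw i * ω i - kv i * V i)^2 := by
      intro i
      rw [htdef i]
      linear_combination ((kd i + kw i) * ω i) * huk i
    obtain ⟨z, hz⟩ : ∃ z : Fin n → ℝ, z = u - (1/2 : ℝ) • V := ⟨_, rfl⟩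
    have hP1 : ∀ i, u i * ((kd i + kw i) * ω i)
        = kw i * ω i * V i - kdi i * ω i * η i - u i * Lw i := by
      intro i
      have hab : kw i * (kw i)⁻¹ = 1 := mul_inv_cancel₀ (hkw i).ne'
      linear_combination (u i) * E1 i + (V i) * huk i
        - ((kw i)⁻¹ * kdi i * η i) * huk i - (kdi i * ω i * η i) * hab
    have hP2 : ∀ i, Vnom * (V i * (LR *ᵥ V) i)
        = kw i * ω i * V i - kv i * V i^2 + V i * Lw i := by
      intro i
      linear_combination -(V i) * E2 i
    have hBr : ∀ i, t i + η i * (Leta *ᵥ η) i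
        + (kphi/γ) * (u i * (LR *ᵥ u) i - V i * (LR *ᵥ u) i)
        + Vnom * (V i * (LR *ᵥ V) i) = 0 := by
      intro i
      rw [htdef i]
      linear_combination hP1 i + hP2 i - (η i) * E3 i + (V i - u i) * hLw i
    have hsum0 : (∑ i, t i) + (η ⬝ᵥ (Leta *ᵥ η))
        + (kphi/γ) * ((u ⬝ᵥ (LR *ᵥ u)) - (V ⬝ᵥ (LR *ᵥ u)))
        + Vnom * (V ⬝ᵥ (LR *ᵥ V)) = 0 := by
      rw [hdot, hdot, hdot, hdot]
      rw [← Finset.sum_sub_distrib, Finset.mul_sum, Finset.mul_sum,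
        ← Finset.sum_add_distrib, ← Finset.sum_add_distrib, ← Finset.sum_add_distrib]
      exact Finset.sum_eq_zero (fun i _ => hBr i)
    -- rewrite the Laplacian part as a sum of nonnegative terms
    have hzz : z ⬝ᵥ (LR *ᵥ z) = (u ⬝ᵥ (LR *ᵥ u)) - (1/2)*(u ⬝ᵥ (LR *ᵥ V))
        - (1/2)*(V ⬝ᵥ (LR *ᵥ u)) + (1/4)*(V ⬝ᵥ (LR *ᵥ V)) := by
      rw [hz]
      rw [hdot, hdot, hdot, hdot, hdot]
      rw [Finset.mul_sum, Finset.mul_sum, Finset.mul_sum,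
        ← Finset.sum_sub_distrib, ← Finset.sum_sub_distrib, ← Finset.sum_add_distrib]
      apply Finset.sum_congr rfl
      intro i _
      have h1 : (LR *ᵥ (u - (1/2 : ℝ) • V)) i = (LR *ᵥ u) i - (1/2)*(LR *ᵥ V) i := by
        rw [Matrix.mulVec_sub, Matrix.mulVec_smul]
        simp
      simp only [Pi.sub_apply, Pi.smul_apply, smul_eq_mul, h1]
      ring
    have hZ : (∑ i, t i) + (η ⬝ᵥ (Leta *ᵥ η))
        + (kphi/γ) * (z ⬝ᵥ (LR *ᵥ z))
        + (Vnom - (kphi/γ)/4) * (V ⬝ᵥ (LR *ᵥ V)) = 0 := by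
      have hs := hsymQ u V
      linear_combination hsum0 + (kphi/γ) * hzz - ((kphi/γ)/2) * hs
    -- nonnegativity of each summand
    have htnn' : ∀ i, 0 ≤ t i := by
      intro i
      have h1 : 0 ≤ kv i * t i := by
        rw [hkvt i]
        have := sq_nonneg (kw i * ω i - kv i * V i)
        have h2 : 0 ≤ kd i * kw i * ω i^2 :=
          mul_nonneg (mul_nonneg (hkd i).le (hkw i).le) (sq_nonneg _)
        linarith
      exact nonneg_of_mul_nonneg_right h1 (hkv i)
    have hcpos : 0 < kphi/γ := div_pos hkphi hγ
    have hcoefpos : 0 < Vnom - (kphi/γ)/4 := by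
      rw [gt_iff_lt, div_lt_iff₀ (mul_pos (by norm_num : (0:ℝ) < 4) hVnom)] at hass2
      have h1 : kphi/γ < 4*Vnom := (div_lt_iff₀ hγ).2 (by nlinarith)
      linarith
    have hT0 : (∑ i, t i) = 0 := by
      have h1 : 0 ≤ ∑ i, t i := Finset.sum_nonneg (fun i _ => htnn' i)
      have h2 := hLetann η
      have h3 := mul_nonneg hcpos.le (hQnn z)
      have h4 := mul_nonneg hcoefpos.le (hQnn V)
      linarith
    have hQvv0 : V ⬝ᵥ (LR *ᵥ V) = 0 := by
      have h1 : 0 ≤ ∑ i, t i := Finset.sum_nonneg (fun i _ => htnn' i)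
      have h2 := hLetann η
      have h3 := mul_nonneg hcpos.le (hQnn z)
      have h4 := hQnn V
      have h5 : (Vnom - (kphi/γ)/4) * (V ⬝ᵥ (LR *ᵥ V)) = 0 := by
        have h6 := mul_nonneg hcoefpos.le h4
        linarith
      rcases mul_eq_zero.1 h5 with h | h
      · exact absurd h hcoefpos.ne'
      · exact h
    -- ω = 0
    have hω0 : ∀ i, ω i = 0 := by
      intro i
      have ht0 : t i = 0 :=
        (Finset.sum_eq_zero_iff_of_nonneg (fun i _ => htnn' i)).1 hT0 i (Finset.mem_univ i)
      have h1 : kv i * t i = 0 := by rw [ht0, mul_zero]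
      rw [hkvt i] at h1
      have h2 : kd i * kw i * ω i^2 = 0 := by
        have h3 := sq_nonneg (kw i * ω i - kv i * V i)
        have h4 : 0 ≤ kd i * kw i * ω i^2 :=
          mul_nonneg (mul_nonneg (hkd i).le (hkw i).le) (sq_nonneg _)
        linarith
      have h5 : ω i ^ 2 = 0 := by
        rcases mul_eq_zero.1 h2 with h | h
        · exact absurd h (mul_pos (hkd i) (hkw i)).ne'
        · exact h
      exact pow_eq_zero_iff (two_ne_zero) |>.1 h5
    -- u = 0, φ = 0, Lw = 0
    have hu0 : ∀ i, u i = 0 := by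
      intro i
      have h := huk i
      rw [hω0 i, mul_zero] at h
      rcases mul_eq_zero.1 h with h' | h'
      · exact absurd h' (hkv i).ne'
      · exact h'
    have hφ0 : ∀ j, φ j = 0 := by
      intro j
      have h := E4 j
      have hu0' : u = 0 := funext hu0
      rw [hu0'] at h
      simp only [Matrix.mulVec_zero, Pi.zero_apply] at h
      rcases mul_eq_zero.1 h.symm with h' | h'
      · exact absurd h' hγ.ne'
      · exact h'
    have hLw0 : ∀ i, Lw i = 0 := by
      intro i
      rw [hLwdef, hwdef]
      have hφ0' : φ = 0 := funext hφ0
      rw [hφ0']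
      simp
    -- V = 0
    have hV0 : ∀ i, V i = 0 := by
      have hpt : ∀ i, Vnom * (V i * (LR *ᵥ V) i) + kv i * V i^2 = 0 := by
        intro i
        have h := E2 i
        rw [hω0 i, hLw0 i] at h
        linear_combination (-(V i)) * h
      have hsum : Vnom * (V ⬝ᵥ (LR *ᵥ V)) + ∑ i, kv i * V i^2 = 0 := by
        rw [hdot, Finset.mul_sum, ← Finset.sum_add_distrib]
        exact Finset.sum_eq_zero (fun i _ => hpt i)
      rw [hQvv0, mul_zero, zero_add] at hsum
      have hterm : ∀ i, 0 ≤ kv i * V i^2 :=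
        fun i => mul_nonneg (hkv i).le (sq_nonneg _)
      intro i
      have h1 : kv i * V i^2 = 0 :=
        (Finset.sum_eq_zero_iff_of_nonneg (fun i _ => hterm i)).1 hsum i (Finset.mem_univ i)
      rcases mul_eq_zero.1 h1 with h' | h'
      · exact absurd h' (hkv i).ne'
      · exact pow_eq_zero_iff (two_ne_zero) |>.1 h'
    -- η = 0
    have hη0 : ∀ i, η i = 0 := by
      intro i
      have h := E1 i
      rw [hω0 i, hV0 i, hLw0 i] at h
      have h2 : kv i * (kw i)⁻¹ * kdi i * η i = 0 := by linarith
      have hpos : 0 < kv i * (kw i)⁻¹ * kdi i :=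
        mul_pos (mul_pos (hkv i) (inv_pos.2 (hkw i))) (hkdi i)
      rcases mul_eq_zero.1 h2 with h' | h'
      · exact absurd h' hpos.ne'
      · exact h'
    rw [hxeq]
    funext i
    rcases i with (i|i)|(i|i)
    · simpa using hω0 i
    · simpa using hV0 i
    · simpa using hη0 i
    · simpa using hφ0 i
  -- conclude
  have hinj : Function.Injective A.mulVec := by
    intro a b hab
    have h0 : A *ᵥ (a - b) = 0 := by rw [Matrix.mulVec_sub, hab, sub_self]
    exact sub_eq_zero.1 (hker _ h0)
  have hunit : IsUnit A := Matrix.mulVec_injective_iff_isUnit.1 hinj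
  refine ⟨hunit, fun b => ?_⟩
  have hdet : IsUnit A.det := A.isUnit_iff_isUnit_det.1 hunit
  refine ⟨A⁻¹ *ᵥ (-b), ?_, ?_⟩
  · show A *ᵥ (A⁻¹ *ᵥ (-b)) + b = 0
    rw [Matrix.mulVec_mulVec, Matrix.mul_nonsing_inv _ hdet, Matrix.one_mulVec]
    simp
  · intro y hy
    apply hinj
    show A *ᵥ y = A *ᵥ _
    rw [Matrix.mulVec_mulVec, Matrix.mul_nonsing_inv _ hdet, Matrix.one_mulVec]
    funext i
    have h := congrFun hy i
    simp only [Pi.add_apply, Pi.zero_apply, Pi.neg_apply] at h ⊢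
    linarith
end

section
/- Under Assumptions 1 and 2, the Lyapunov function W is nonincreasing along trajectories of the closed-loop system: with P = diag(K^ω(K^V)^{−1}M^{−1}, V^nom·C, I_n, Sᵀ L_φ S) and E = C^{−1}, the matrix −(P A + Aᵀ P) is positive semidefinite, i.e., xᵀ P A x ≤ 0 for all x ∈ ℝ^{3n+(n−1)}. -/
open Matrix Filter

@[simp] lemma elim_add_elim {α β γ : Type*} [Add γ] (a c : α → γ) (b d : β → γ) :
    (Sum.elim a b) + (Sum.elim c d) = Sum.elim (a + c) (b + d) := by
  ext x; cases x <;> simp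

@[simp] lemma smul_elim {α β : Type*} (r : ℝ) (a : α → ℝ) (b : β → ℝ) :
    r • (Sum.elim a b) = Sum.elim (r • a) (r • b) := by
  ext x; cases x <;> simp

@[simp] lemma diag_mv {n : ℕ} (d w : Fin n → ℝ) :
    Matrix.diagonal d *ᵥ w = d * w := by
  ext i; simp [Matrix.mulVec_diagonal]

lemma diag_inv {n : ℕ} {d : Fin n → ℝ} (hd : ∀ i, d i ≠ 0) :
    (Matrix.diagonal d)⁻¹ = Matrix.diagonal (fun i => (d i)⁻¹) := by
  apply Matrix.inv_eq_right_inv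
  rw [Matrix.diagonal_mul_diagonal]
  have : (fun i => d i * (d i)⁻¹) = fun _ => (1:ℝ) := funext fun i => mul_inv_cancel₀ (hd i)
  rw [this, Matrix.diagonal_one]

lemma dot_swap {n : ℕ} {L : Matrix (Fin n) (Fin n) ℝ} (hL : Lᵀ = L) (a b : Fin n → ℝ) :
    a ⬝ᵥ (L *ᵥ b) = b ⬝ᵥ (L *ᵥ a) := by
  rw [Matrix.dotProduct_mulVec, ← hL, Matrix.vecMul_transpose, dotProduct_comm, hL]

lemma dot_St {n : ℕ} (S : Matrix (Fin n) (Fin (n-1)) ℝ) (φ : Fin (n-1) → ℝ) (X : Fin n → ℝ) :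
    φ ⬝ᵥ (Sᵀ *ᵥ X) = (S *ᵥ φ) ⬝ᵥ X := by
  rw [Matrix.dotProduct_mulVec, Matrix.vecMul_transpose]


lemma SSt_eq {n : ℕ} (hn : 2 ≤ n) (S : Matrix (Fin n) (Fin (n - 1)) ℝ)
    (hS : Sᵀ * S = 1) (hS1 : Sᵀ *ᵥ (fun _ => (1 : ℝ)) = 0) :
    S * Sᵀ = 1 - Matrix.of (fun _ _ => (n : ℝ)⁻¹) := by
  have hn0 : (n : ℝ) ≠ 0 := by positivity
  set J : Matrix (Fin n) (Fin n) ℝ := Matrix.of (fun _ _ => (n : ℝ)⁻¹) with hJ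
  set Q : Matrix (Fin n) (Fin n) ℝ := 1 - S * Sᵀ - J with hQ
  have hStJ : Sᵀ * J = 0 := by
    ext i j
    have := congrFun hS1 i
    simp [mulVec, dotProduct] at this
    simp [J, Matrix.mul_apply, ← Finset.sum_mul, this]
  have hJt : Jᵀ = J := by ext i j; simp [J]
  have hJS : J * (S * Sᵀ) = 0 := by
    have h : (S * Sᵀ * J)ᵀ = 0 := by
      rw [Matrix.mul_assoc, hStJ, Matrix.mul_zero]
      simp
    rw [Matrix.transpose_mul, hJt, Matrix.transpose_mul, Matrix.transpose_transpose] at h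
    exact h
  have hSJ : (S * Sᵀ) * J = 0 := by rw [Matrix.mul_assoc, hStJ, Matrix.mul_zero]
  have hJJ : J * J = J := by
    ext i j
    simp [J, Matrix.mul_apply]
    field_simp
  have hSS : (S * Sᵀ) * (S * Sᵀ) = S * Sᵀ := by
    rw [Matrix.mul_assoc, ← Matrix.mul_assoc Sᵀ, hS, Matrix.one_mul]
  have hQidem : Q * Q = Q := by
    simp only [hQ, Matrix.sub_mul, Matrix.mul_sub, Matrix.one_mul, Matrix.mul_one,
      hSS, hJJ, hSJ, hJS]
    abel
  have hQsym : Qᵀ = Q := by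
    simp only [hQ, Matrix.transpose_sub, Matrix.transpose_one, hJt,
      Matrix.transpose_mul, Matrix.transpose_transpose]
  have htr : Q.trace = 0 := by
    have h1 : (S * Sᵀ).trace = ((n : ℝ) - 1) := by
      rw [Matrix.trace_mul_comm, hS, Matrix.trace_one]
      simp
      rw [Nat.cast_sub (by omega)]
      simp
    have h2 : J.trace = 1 := by
      simp [Matrix.trace, J, Matrix.diag]
      field_simp
    simp [hQ, Matrix.trace_sub, h1, h2, Matrix.trace_one]
  have hQ0 : Q = 0 := by
    have h : (0:ℝ) = (Qᵀ * Q).trace := by rw [hQsym, hQidem, htr]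
    have h2 : ∑ j : Fin n, ∑ i : Fin n, Q i j * Q i j = 0 := by
      rw [h]
      simp [Matrix.trace, Matrix.diag, Matrix.mul_apply]
    ext i j
    have := (Finset.sum_eq_zero_iff_of_nonneg (fun j _ =>
      Finset.sum_nonneg (fun i _ => mul_self_nonneg (Q i j)))).mp h2 j (Finset.mem_univ j)
    have := (Finset.sum_eq_zero_iff_of_nonneg (fun i _ => mul_self_nonneg (Q i j))).mp this i (Finset.mem_univ i)
    simpa [mul_self_eq_zero] using this
  have h := hQ0
  rw [hQ, sub_right_comm, sub_eq_zero] at h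
  exact h.symm

/-- The block-diagonal matrix `P = diag(K^ω (K^V)⁻¹ M⁻¹, V^nom C, I, Sᵀ L_φ S)`
of the Lyapunov function `W(x) = ½ xᵀ P x`. -/
noncomputable def lyapP {n : ℕ}
    (M C Kw KV Lphi : Matrix (Fin n) (Fin n) ℝ)
    (S : Matrix (Fin n) (Fin (n - 1)) ℝ) (Vnom : ℝ) :
    Matrix (Idx n) (Idx n) ℝ :=
  Matrix.fromBlocks
    (Matrix.fromBlocks (Kw * KV⁻¹ * M⁻¹) 0 0 (Vnom • C))
    0 0
    (Matrix.fromBlocks 1 0 0 (Sᵀ * Lphi * S))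

set_option maxHeartbeats 1600000

/-- Under Assumptions 1 and 2 (with `E = C⁻¹`), the Lyapunov function is
nonincreasing along trajectories: `−(P A + Aᵀ P)` is positive semidefinite,
i.e. `xᵀ P A x ≤ 0` for all `x`. -/
theorem stmt_4 {n : ℕ} (hn : 2 ≤ n)
    (m c kw kv kd kdi : Fin n → ℝ)
    (hm : ∀ i, 0 < m i) (hc : ∀ i, 0 < c i) (hkw : ∀ i, 0 < kw i)
    (hkv : ∀ i, 0 < kv i) (hkd : ∀ i, 0 < kd i) (hkdi : ∀ i, 0 < kdi i)
    (E : Matrix (Fin n) (Fin n) ℝ) (hE : E = (Matrix.diagonal c)⁻¹)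
    (LR Leta Lphi : Matrix (Fin n) (Fin n) ℝ)
    (hLR : IsConnLaplacian LR) (hLeta : IsConnLaplacian Leta)
    (hLphi : IsConnLaplacian Lphi)
    (S : Matrix (Fin n) (Fin (n - 1)) ℝ)
    (hS : Sᵀ * S = 1) (hS1 : Sᵀ *ᵥ (fun _ => (1 : ℝ)) = 0)
    (Vnom γ kphi : ℝ) (hVnom : 0 < Vnom) (hγ : 0 < γ) (hkphi : 0 < kphi)
    -- Assumption 1
    (hass1 : Lphi = kphi • LR)
    -- Assumption 2
    (hass2 : γ > kphi / (4 * Vnom))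
    (A : Matrix (Idx n) (Idx n) ℝ)
    (hA : A = closedLoopA (Matrix.diagonal m) E
      (Matrix.diagonal kw) (Matrix.diagonal kv) (Matrix.diagonal kd)
      (Matrix.diagonal kdi) LR Leta Lphi S Vnom γ)
    (P : Matrix (Idx n) (Idx n) ℝ)
    (hP : P = lyapP (Matrix.diagonal m) (Matrix.diagonal c)
      (Matrix.diagonal kw) (Matrix.diagonal kv) Lphi S Vnom) :
    (-(P * A + Aᵀ * P)).PosSemidef ∧
      ∀ x : Idx n → ℝ, x ⬝ᵥ ((P * A) *ᵥ x) ≤ 0 := by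
  subst hA hP hE hass1
  obtain ⟨hLRpsd, hLR1, -⟩ := hLR
  obtain ⟨hLetapsd, -, -⟩ := hLeta
  have hm0 : ∀ i, m i ≠ 0 := fun i => (hm i).ne'
  have hc0 : ∀ i, c i ≠ 0 := fun i => (hc i).ne'
  have hkw0 : ∀ i, kw i ≠ 0 := fun i => (hkw i).ne'
  have hkv0 : ∀ i, kv i ≠ 0 := fun i => (hkv i).ne'
  have hLRsym : LRᵀ = LR := by
    rw [← Matrix.conjTranspose_eq_transpose_of_trivial]; exact hLRpsd.1
  have hSSt := SSt_eq hn S hS hS1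
  have key : ∀ x : Idx n → ℝ, x ⬝ᵥ ((lyapP (Matrix.diagonal m) (Matrix.diagonal c)
      (Matrix.diagonal kw) (Matrix.diagonal kv) (kphi • LR) S Vnom *
      closedLoopA (Matrix.diagonal m) ((Matrix.diagonal c)⁻¹) (Matrix.diagonal kw)
        (Matrix.diagonal kv) (Matrix.diagonal kd) (Matrix.diagonal kdi) LR Leta
        (kphi • LR) S Vnom γ) *ᵥ x) ≤ 0 := by
    intro x
    obtain ⟨ω, v, η, φ, rfl⟩ : ∃ ω v η φ, x = (ω ⊕ᵥ v) ⊕ᵥ (η ⊕ᵥ φ) :=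
      ⟨fun i => x (Sum.inl (Sum.inl i)), fun i => x (Sum.inl (Sum.inr i)),
       fun i => x (Sum.inr (Sum.inl i)), fun i => x (Sum.inr (Sum.inr i)),
       by funext j; rcases j with (j|j)|(j|j) <;> rfl⟩
    rw [← mulVec_mulVec]
    simp only [closedLoopA, lyapP, diag_inv hm0, diag_inv hc0, diag_inv hkw0, diag_inv hkv0,
      fromBlocks_mulVec, Sum.elim_comp_inl, Sum.elim_comp_inr,
      sumElim_dotProduct_sumElim, Matrix.add_mulVec, Matrix.neg_mulVec, Matrix.zero_mulVec,
      Matrix.smul_mulVec, ← mulVec_mulVec,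
      Matrix.one_mulVec, add_zero, zero_add, elim_add_elim, smul_elim, diag_mv, Matrix.mulVec_smul]
    set u : Fin n → ℝ := S *ᵥ φ with hu
    set w : Fin n → ℝ := (fun i => (kv i)⁻¹) * (kw * ω) with hw
    have hJw : LR *ᵥ ((Matrix.of (fun _ _ => (n : ℝ)⁻¹) : Matrix (Fin n) (Fin n) ℝ) *ᵥ w) = 0 := by
      have : (Matrix.of (fun _ _ => (n : ℝ)⁻¹) : Matrix (Fin n) (Fin n) ℝ) *ᵥ w
          = ((n : ℝ)⁻¹ * ∑ i, w i) • (fun _ => (1:ℝ)) := by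
        ext j
        simp [Matrix.mulVec, dotProduct, Finset.mul_sum]
      rw [this, Matrix.mulVec_smul, hLR1, smul_zero]
    have hkey : LR *ᵥ (S *ᵥ (Sᵀ *ᵥ w + -(γ • φ))) = LR *ᵥ w - γ • (LR *ᵥ u) := by
      rw [Matrix.mulVec_add, Matrix.mulVec_neg, Matrix.mulVec_smul,
        Matrix.mulVec_mulVec, hSSt, Matrix.sub_mulVec, Matrix.one_mulVec]
      rw [Matrix.mulVec_add, Matrix.mulVec_neg, Matrix.mulVec_smul, Matrix.mulVec_sub, hJw]
      rw [hu]
      abel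
    rw [hkey]
    simp only [dotProduct_smul]
    rw [dot_St, ← hu, dotProduct_sub, dotProduct_smul, dot_swap hLRsym u w]
    have hred1 : (fun i => (m i)⁻¹) * (-(m * (kd * ω + kw * ω)) + m * (kv * v) +
        (-(m * (kv * ((fun i => (kw i)⁻¹) * (kdi * η)))) + -(kphi • (m * (LR *ᵥ u))))) =
        -(kd * ω + kw * ω) + kv * v + (-(kv * ((fun i => (kw i)⁻¹) * (kdi * η))) + -(kphi • (LR *ᵥ u))) := by
      funext i
      simp only [Pi.mul_apply, Pi.add_apply, Pi.neg_apply, Pi.smul_apply, smul_eq_mul]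
      field_simp [hm0 i, hkw0 i]
    have hred2 : c * ((1/Vnom) • ((fun i => (c i)⁻¹) * (kw * ω)) +
        -((fun i => (c i)⁻¹) * (LR *ᵥ v + (1/Vnom) • (kv * v))) +
        (1/Vnom) • kphi • ((fun i => (c i)⁻¹) * (LR *ᵥ u))) =
        (1/Vnom) • (kw * ω) + -(LR *ᵥ v + (1/Vnom) • (kv * v)) + (1/Vnom) • kphi • (LR *ᵥ u) := by
      funext i
      simp only [Pi.mul_apply, Pi.add_apply, Pi.neg_apply, Pi.smul_apply, smul_eq_mul]
      field_simp [hc0 i, hVnom.ne']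
    rw [hred1, hred2]
    rw [← dotProduct_smul]
    have hblock1 : kw * ((fun i => (kv i)⁻¹) *
        (-(kd * ω + kw * ω) + kv * v + (-(kv * ((fun i => (kw i)⁻¹) * (kdi * η))) + -(kphi • (LR *ᵥ u))))) =
        (fun i => (kv i)⁻¹ * (kw i * (-(kd i + kw i) * ω i))) + kw * v + -(kdi * η)
          + -(kphi • ((fun i => (kv i)⁻¹) * (kw * (LR *ᵥ u)))) := by
      funext i
      simp only [Pi.mul_apply, Pi.add_apply, Pi.neg_apply, Pi.smul_apply, smul_eq_mul]
      field_simp [hkw0 i, hkv0 i]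
      ring
    have hblock2 : Vnom • ((1/Vnom) • (kw * ω) + -(LR *ᵥ v + (1/Vnom) • (kv * v)) + (1/Vnom) • kphi • (LR *ᵥ u)) =
        kw * ω + -(Vnom • (LR *ᵥ v)) + -(kv * v) + kphi • (LR *ᵥ u) := by
      funext i
      simp only [Pi.add_apply, Pi.neg_apply, Pi.smul_apply, Pi.mul_apply, smul_eq_mul]
      field_simp [hVnom.ne']
      ring
    rw [hblock1, hblock2]
    have goal2 : (∑ i, ((kv i)⁻¹ * (kw i * (-(kd i + kw i) * ω i^2)) + 2 * kw i * ω i * v i - kv i * v i^2))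
        - Vnom * (v ⬝ᵥ (LR *ᵥ v)) + kphi * (v ⬝ᵥ (LR *ᵥ u)) - (γ * kphi) * (u ⬝ᵥ (LR *ᵥ u))
        - η ⬝ᵥ (Leta *ᵥ η) ≤ 0 := by
      have hsum : (∑ i, ((kv i)⁻¹ * (kw i * (-(kd i + kw i) * ω i^2)) + 2 * kw i * ω i * v i - kv i * v i^2)) ≤ 0 := by
        apply Finset.sum_nonpos
        intro i _
        have hkey2 : (kv i)⁻¹ * (kw i * (-(kd i + kw i) * ω i ^ 2)) + 2 * kw i * ω i * v i - kv i * v i ^ 2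
            = -((kv i)⁻¹ * (kw i * kd i * ω i ^ 2) + (kv i)⁻¹ * (kw i * ω i - kv i * v i) ^ 2) := by
          field_simp [hkv0 i]
          ring
        rw [hkey2]
        have h1 : (0:ℝ) ≤ (kv i)⁻¹ * (kw i * kd i * ω i ^ 2) + (kv i)⁻¹ * (kw i * ω i - kv i * v i)^2 := by
          have := (hkv i); have := (hkw i); have := (hkd i); positivity
        linarith
      have heta : 0 ≤ η ⬝ᵥ (Leta *ᵥ η) := by simpa using (Matrix.posSemidef_iff_dotProduct_mulVec.mp hLetapsd).2 η
      obtain ⟨B, hB⟩ : ∃ B : Matrix (Fin n) (Fin n) ℝ, LR = Bᴴ * B := by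
        open scoped MatrixOrder Matrix.Norms.L2Operator in
        exact CStarAlgebra.nonneg_iff_eq_star_mul_self.mp hLRpsd.nonneg
      rw [Matrix.conjTranspose_eq_transpose_of_trivial] at hB
      have hq : ∀ a b : Fin n → ℝ, a ⬝ᵥ (LR *ᵥ b) = (B *ᵥ a) ⬝ᵥ (B *ᵥ b) := by
        intro a b
        rw [hB, ← Matrix.mulVec_mulVec, Matrix.dotProduct_mulVec, Matrix.vecMul_transpose]
      rw [hq v v, hq v u, hq u u]
      set p := B *ᵥ v with hp
      set q := B *ᵥ u with hq2
      set a1 : ℝ := p ⬝ᵥ p with ha1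
      set a2 : ℝ := p ⬝ᵥ q with ha2
      set a3 : ℝ := q ⬝ᵥ q with ha3
      have hqq : 0 ≤ a3 := by
        rw [ha3]; exact Finset.sum_nonneg fun i _ => mul_self_nonneg _
      have h0 : 0 ≤ 4*Vnom*Vnom*a1 - 4*Vnom*kphi*a2 + kphi*kphi*a3 := by
        rw [ha1, ha2, ha3]
        have h := Finset.sum_nonneg (s := Finset.univ)
          (fun i _ => sq_nonneg (2*Vnom*p i - kphi*q i))
        refine le_trans h (le_of_eq ?_)
        simp only [dotProduct, Finset.mul_sum, ← Finset.sum_add_distrib,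
          ← Finset.sum_sub_distrib]
        refine Finset.sum_congr rfl fun i _ => ?_
        ring
      have h4 : kphi < 4 * Vnom * γ := by
        have hass2' : kphi/(4*Vnom) < γ := hass2
        rw [div_lt_iff₀ (by linarith)] at hass2'
        nlinarith
      have h5 : 0 ≤ 4*Vnom*(Vnom * a1 - kphi * a2 + γ * kphi * a3) := by
        nlinarith [h0, mul_nonneg (mul_nonneg hkphi.le (sub_nonneg.2 h4.le)) hqq]
      have hmid : 0 ≤ Vnom * a1 - kphi * a2 + γ * kphi * a3 :=
        le_of_mul_le_mul_left (by linarith) (by linarith : (0:ℝ) < 4*Vnom)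
      linarith [hsum, heta, hmid]
    refine le_trans (le_of_eq ?_) goal2
    simp only [hw, dotProduct, Pi.mul_apply, Pi.add_apply, Pi.neg_apply, Pi.smul_apply,
      Pi.sub_apply, smul_eq_mul, mul_sub, mul_add, Finset.mul_sum,
      ← Finset.sum_add_distrib, ← Finset.sum_sub_distrib, ← Finset.sum_neg_distrib]
    refine Finset.sum_congr rfl fun i _ => ?_
    ring
  set P : Matrix (Idx n) (Idx n) ℝ := lyapP (Matrix.diagonal m) (Matrix.diagonal c)
      (Matrix.diagonal kw) (Matrix.diagonal kv) (kphi • LR) S Vnom with hPdef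
  set A : Matrix (Idx n) (Idx n) ℝ := closedLoopA (Matrix.diagonal m) ((Matrix.diagonal c)⁻¹)
      (Matrix.diagonal kw) (Matrix.diagonal kv) (Matrix.diagonal kd) (Matrix.diagonal kdi)
      LR Leta (kphi • LR) S Vnom γ with hAdef
  have hD : (Matrix.diagonal kw * (Matrix.diagonal kv)⁻¹ * (Matrix.diagonal m)⁻¹)ᵀ
      = Matrix.diagonal kw * (Matrix.diagonal kv)⁻¹ * (Matrix.diagonal m)⁻¹ := by
    simp only [Matrix.transpose_mul, Matrix.diagonal_transpose, diag_inv hkv0, diag_inv hm0,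
      Matrix.diagonal_mul_diagonal]
    try (congr 1; funext i; ring)
  have hT : (Sᵀ * (kphi • LR) * S)ᵀ = Sᵀ * (kphi • LR) * S := by
    simp only [Matrix.transpose_mul, Matrix.transpose_smul, hLRsym, Matrix.transpose_transpose]
    rw [Matrix.mul_assoc]
  have hPsym : Pᵀ = P := by
    rw [hPdef]
    simp only [lyapP, Matrix.fromBlocks_transpose, Matrix.transpose_zero, Matrix.transpose_one,
      Matrix.transpose_smul, Matrix.diagonal_transpose, hD, hT]
  have hswap : ∀ x : Idx n → ℝ, x ⬝ᵥ ((Aᵀ * P) *ᵥ x) = x ⬝ᵥ ((P * A) *ᵥ x) := by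
    intro x
    have h1 : Aᵀ * P = (P * A)ᵀ := by rw [Matrix.transpose_mul, hPsym]
    rw [h1, Matrix.dotProduct_mulVec, Matrix.vecMul_transpose, dotProduct_comm]
  constructor
  · refine Matrix.posSemidef_iff_dotProduct_mulVec.mpr ⟨?_, fun x => ?_⟩
    · show (-(P * A + Aᵀ * P))ᴴ = -(P * A + Aᵀ * P)
      rw [Matrix.conjTranspose_eq_transpose_of_trivial, Matrix.transpose_neg, Matrix.transpose_add,
        Matrix.transpose_mul, Matrix.transpose_mul, Matrix.transpose_transpose, hPsym]
      abel
    · have hgoal : 0 ≤ x ⬝ᵥ ((-(P * A + Aᵀ * P)) *ᵥ x) := by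
        rw [Matrix.neg_mulVec, dotProduct_neg, Matrix.add_mulVec, dotProduct_add]
        linarith [hswap x, key x]
      simpa using hgoal
  · exact key
end

section
/- The largest invariant set of the closed-loop dynamics contained in G = {(ω̄, V̄, η̄, φ̄) : ω̄ = 0, V̄ = 0, φ̄ = 0, η̄ ∈ span{1_n}} is the origin: every linear subspace U ⊆ ℝ^{3n+(n−1)} satisfying A·U ⊆ U and U ⊆ G equals {0}. In particular, for x = (0_n, 0_n, k·1_n, 0_{n−1}), the first (ω̄) block of A x equals −k·M K^V (K^ω)^{−1} K^{droop,I} 1_n, which vanishes if and only if k = 0. -/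
open Matrix Filter

lemma diag_inv_pos {n : ℕ} (kw : Fin n → ℝ) (hkw : ∀ i, 0 < kw i) :
    (Matrix.diagonal kw)⁻¹ = Matrix.diagonal (fun i => (kw i)⁻¹) := by
  apply Matrix.inv_eq_right_inv
  rw [Matrix.diagonal_mul_diagonal]
  convert Matrix.diagonal_one
  exact mul_inv_cancel₀ (hkw _).ne'

/-- The largest invariant set contained in
`G = {(ω̄, V̄, η̄, φ̄) : ω̄ = 0, V̄ = 0, φ̄ = 0, η̄ ∈ span{1ₙ}}` is the origin:
any `A`-invariant linear subspace contained in `G` is trivial. In particular,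
for `x = (0, 0, k·1ₙ, 0)` the `ω̄`-block of `A x` is
`−k · M K^V (K^ω)⁻¹ K^{droop,I} 1ₙ`, which vanishes iff `k = 0`. -/
theorem stmt_6 {n : ℕ} (hn : 2 ≤ n)
    (m c kw kv kd kdi : Fin n → ℝ)
    (hm : ∀ i, 0 < m i) (hc : ∀ i, 0 < c i) (hkw : ∀ i, 0 < kw i)
    (hkv : ∀ i, 0 < kv i) (hkd : ∀ i, 0 < kd i) (hkdi : ∀ i, 0 < kdi i)
    (E : Matrix (Fin n) (Fin n) ℝ) (hE : E = (Matrix.diagonal c)⁻¹)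
    (LR Leta Lphi : Matrix (Fin n) (Fin n) ℝ)
    (hLR : IsConnLaplacian LR) (hLeta : IsConnLaplacian Leta)
    (hLphi : IsConnLaplacian Lphi)
    (S : Matrix (Fin n) (Fin (n - 1)) ℝ)
    (hS : Sᵀ * S = 1) (hS1 : Sᵀ *ᵥ (fun _ => (1 : ℝ)) = 0)
    (Vnom γ : ℝ) (hVnom : 0 < Vnom) (hγ : 0 < γ)
    (A : Matrix (Idx n) (Idx n) ℝ)
    (hA : A = closedLoopA (Matrix.diagonal m) E
      (Matrix.diagonal kw) (Matrix.diagonal kv) (Matrix.diagonal kd)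
      (Matrix.diagonal kdi) LR Leta Lphi S Vnom γ)
    (G : Set (Idx n → ℝ))
    (hG : G = {x : Idx n → ℝ |
      (∀ i, x (Sum.inl (Sum.inl i)) = 0) ∧
      (∀ i, x (Sum.inl (Sum.inr i)) = 0) ∧
      (∀ i, x (Sum.inr (Sum.inr i)) = 0) ∧
      (∃ k : ℝ, ∀ i, x (Sum.inr (Sum.inl i)) = k)}) :
    (∀ U : Submodule ℝ (Idx n → ℝ),
        (∀ u ∈ U, A *ᵥ u ∈ U) → (U : Set (Idx n → ℝ)) ⊆ G → U = ⊥) ∧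
    (∀ k : ℝ,
      ((fun i => (A *ᵥ (Sum.elim (Sum.elim 0 0)
          (Sum.elim (fun _ => k) 0) : Idx n → ℝ)) (Sum.inl (Sum.inl i)))
        = fun i => -k * ((Matrix.diagonal m * (Matrix.diagonal kv *
            (Matrix.diagonal kw)⁻¹ * Matrix.diagonal kdi)) *ᵥ
            (fun _ => (1 : ℝ))) i) ∧
      ((fun i => (A *ᵥ (Sum.elim (Sum.elim 0 0)
          (Sum.elim (fun _ => k) 0) : Idx n → ℝ)) (Sum.inl (Sum.inl i)))
        = (0 : Fin n → ℝ) ↔ k = 0)) := by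
  have i0 : Fin n := ⟨0, by omega⟩
  have hdiag : Matrix.diagonal kv * (Matrix.diagonal kw)⁻¹ * Matrix.diagonal kdi
      = Matrix.diagonal (fun i => kv i * (kw i)⁻¹ * kdi i) := by
    rw [diag_inv_pos kw hkw, Matrix.diagonal_mul_diagonal,
      Matrix.diagonal_mul_diagonal]
  have hpos : ∀ i, 0 < m i * (kv i * (kw i)⁻¹ * kdi i) := fun i =>
    mul_pos (hm i) (mul_pos (mul_pos (hkv i) (inv_pos.2 (hkw i))) (hkdi i))
  have hcomp : ∀ k : ℝ, ∀ i : Fin n,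
      (A *ᵥ (Sum.elim (Sum.elim 0 0)
        (Sum.elim (fun _ => k) 0) : Idx n → ℝ)) (Sum.inl (Sum.inl i))
      = -(m i * (kv i * (kw i)⁻¹ * kdi i) * k) := by
    intro k i
    subst hA
    simp only [closedLoopA, hdiag, Matrix.fromBlocks_mulVec, Sum.elim_comp_inl,
      Sum.elim_comp_inr, Matrix.mulVec_zero, Sum.elim_inl, Sum.elim_inr,
      Pi.add_apply, add_zero, zero_add, Matrix.neg_mulVec, Pi.neg_apply,
      Pi.zero_apply, Matrix.mul_assoc]
    rw [← Matrix.mulVec_mulVec, Matrix.mulVec_diagonal, Matrix.mulVec_diagonal]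
    ring
  constructor
  · intro U hInv hSub
    rw [Submodule.eq_bot_iff]
    intro u hu
    have hug := hSub hu
    rw [hG] at hug
    obtain ⟨h1, h2, h4, k, h3⟩ := hug
    have hu' : u = (Sum.elim (Sum.elim 0 0)
        (Sum.elim (fun _ => k) 0) : Idx n → ℝ) := by
      funext x
      rcases x with (x | x) | (x | x)
      · simpa using h1 x
      · simpa using h2 x
      · simpa using h3 x
      · simpa using h4 x
    have hAu := hSub (hInv u hu)
    rw [hG] at hAu
    have hz := hAu.1 i0
    rw [hu', hcomp k i0] at hz
    have hk0 : k = 0 := by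
      have := hpos i0
      nlinarith
    rw [hu', hk0]
    funext x
    rcases x with (x | x) | (x | x) <;> simp
  · intro k
    constructor
    · funext i
      rw [hcomp k i, hdiag, Matrix.diagonal_mul_diagonal, Matrix.mulVec_diagonal]
      ring
    · constructor
      · intro h
        have := congrFun h i0
        rw [hcomp k i0] at this
        simp only [Pi.zero_apply] at this
        have := hpos i0
        nlinarith
      · intro hk
        subst hk
        funext i
        rw [hcomp 0 i]
        simp
end
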